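/- For every two rooted (respectively unrooted) phylogenies T1 and T2 over the same taxon set, the Hausdorff triplet (respectively quartet) distance satisfies d_Haus(T1,T2) ≥ |D(T1,T2)| + (2/3)·max{ |R1(T1,T2)|, |R2(T1,T2)| }. -/

import Mathlib

open Finset

attribute [local instance] Classical.propDecidable

/-- A rooted phylogenetic tree over the taxon set `Fin n`, encoded by its hierarchy of
clusters: for each node of the tree, the set of leaves descending from that node.
The conditions say that the whole leaf set and all singletons are clusters, the empty
set is not a cluster, and that the family is laminar.  Such families correspond exactly
to rooted phylogenies in which every internal node has at least two children. -/
structure RTree (n : ℕ) where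
  clusters : Finset (Finset (Fin n))
  univ_mem : Finset.univ ∈ clusters
  singleton_mem : ∀ x : Fin n, {x} ∈ clusters
  empty_not_mem : ∅ ∉ clusters
  laminar : ∀ C ∈ clusters, ∀ D ∈ clusters, C ⊆ D ∨ D ⊆ C ∨ C ∩ D = ∅

/-- All triplets (3-element subsets) of `Fin n`. -/
def triplets (n : ℕ) : Finset (Finset (Fin n)) :=
  Finset.powersetCard 3 Finset.univ

/-- The cluster family of the restriction `T|X`, for a rooted tree with cluster
family `F`: the nonempty intersections of clusters with `X`. -/
noncomputable def famRestrict {n : ℕ} (F : Finset (Finset (Fin n))) (X : Finset (Fin n)) :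
    Finset (Finset (Fin n)) :=
  (F.image (· ∩ X)).filter (· ≠ ∅)

/-- A triplet `X` is resolved in a rooted tree with cluster family `F` iff the
restriction `T|X` is fully resolved, equivalently iff some cluster contains exactly
two of the three elements of `X`. -/
def famResolved {n : ℕ} (F : Finset (Finset (Fin n))) (X : Finset (Fin n)) : Prop :=
  ∃ C ∈ F, (C ∩ X).card = 2

/-- Triplets resolved, identically, in both trees. -/
noncomputable def famSetS {n : ℕ} (F G : Finset (Finset (Fin n))) :
    Finset (Finset (Fin n)) :=
  (triplets n).filter fun X =>
    famResolved F X ∧ famResolved G X ∧ famRestrict F X = famRestrict G X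

/-- Triplets resolved, differently, in both trees. -/
noncomputable def famSetD {n : ℕ} (F G : Finset (Finset (Fin n))) :
    Finset (Finset (Fin n)) :=
  (triplets n).filter fun X =>
    famResolved F X ∧ famResolved G X ∧ famRestrict F X ≠ famRestrict G X

/-- Triplets resolved in the first tree but not in the second. -/
noncomputable def famSetR1 {n : ℕ} (F G : Finset (Finset (Fin n))) :
    Finset (Finset (Fin n)) :=
  (triplets n).filter fun X => famResolved F X ∧ ¬ famResolved G X

/-- Triplets resolved in the second tree but not in the first. -/
noncomputable def famSetR2 {n : ℕ} (F G : Finset (Finset (Fin n))) :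
    Finset (Finset (Fin n)) :=
  (triplets n).filter fun X => famResolved G X ∧ ¬ famResolved F X

/-- Triplets unresolved in both trees. -/
noncomputable def famSetU {n : ℕ} (F G : Finset (Finset (Fin n))) :
    Finset (Finset (Fin n)) :=
  (triplets n).filter fun X => ¬ famResolved F X ∧ ¬ famResolved G X

/-- The parametric triplet distance, at the level of cluster families. -/
noncomputable def famPdist {n : ℕ} (p : ℝ) (F G : Finset (Finset (Fin n))) : ℝ :=
  ((famSetD F G).card : ℝ) +
    p * (((famSetR1 F G).card : ℝ) + ((famSetR2 F G).card : ℝ))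

namespace RTree

variable {n : ℕ}

/-- The cluster family of the restriction `T|X`. -/
noncomputable def restrict (T : RTree n) (X : Finset (Fin n)) : Finset (Finset (Fin n)) :=
  famRestrict T.clusters X

/-- The triplet `X` is resolved in `T`, i.e. `T|X` is fully resolved. -/
def Resolved (T : RTree n) (X : Finset (Fin n)) : Prop :=
  famResolved T.clusters X

/-- A rooted phylogeny is fully resolved (all internal nodes have exactly two
children) iff every triplet is resolved in it. -/
def FullyResolved (T : RTree n) : Prop :=
  ∀ X ∈ triplets n, T.Resolved X

noncomputable def setS (T₁ T₂ : RTree n) : Finset (Finset (Fin n)) :=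
  famSetS T₁.clusters T₂.clusters

noncomputable def setD (T₁ T₂ : RTree n) : Finset (Finset (Fin n)) :=
  famSetD T₁.clusters T₂.clusters

noncomputable def setR1 (T₁ T₂ : RTree n) : Finset (Finset (Fin n)) :=
  famSetR1 T₁.clusters T₂.clusters

noncomputable def setR2 (T₁ T₂ : RTree n) : Finset (Finset (Fin n)) :=
  famSetR2 T₁.clusters T₂.clusters

noncomputable def setU (T₁ T₂ : RTree n) : Finset (Finset (Fin n)) :=
  famSetU T₁.clusters T₂.clusters

/-- The parametric triplet distance `d⁽ᵖ⁾(T₁,T₂)`. -/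
noncomputable def pdist (p : ℝ) (T₁ T₂ : RTree n) : ℝ :=
  famPdist p T₁.clusters T₂.clusters

theorem clusters_injective : Function.Injective (clusters (n := n)) := by
  rintro ⟨s₁, _, _, _, _⟩ ⟨s₂, _, _, _, _⟩ h
  simp only [mk.injEq] at h ⊢
  exact h

noncomputable instance : Fintype (RTree n) :=
  Fintype.ofInjective clusters clusters_injective

end RTree

/-- An unrooted phylogenetic tree over the taxon set `Fin n`, encoded by its split
system: the collection of all sets of leaves lying on one side of some edge of the
tree.  By the splits-equivalence (Buneman) theorem, the families satisfying these
conditions (all trivial splits present, closure under complementation, pairwise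
compatibility) correspond exactly to unrooted phylogenies in which every internal
node has degree at least three. -/
structure UTree (n : ℕ) where
  splits : Finset (Finset (Fin n))
  empty_not_mem : ∅ ∉ splits
  trivial_mem : ∀ x : Fin n, ({x} : Finset (Fin n)) = Finset.univ ∨ {x} ∈ splits
  compl_mem : ∀ A ∈ splits, Finset.univ \ A ∈ splits
  compat : ∀ A ∈ splits, ∀ B ∈ splits, A ⊆ B ∨ B ⊆ A ∨ A ∩ B = ∅ ∨ A ∪ B = Finset.univ

/-- All quartets (4-element subsets) of `Fin n`. -/
def quartets (n : ℕ) : Finset (Finset (Fin n)) :=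
  Finset.powersetCard 4 Finset.univ

/-- The split system of the restriction `T|X`, for an unrooted tree with split
system `F`: the proper nonempty intersections of split sides with `X`. -/
noncomputable def famRestrictU {n : ℕ} (F : Finset (Finset (Fin n))) (X : Finset (Fin n)) :
    Finset (Finset (Fin n)) :=
  (F.image (· ∩ X)).filter fun A => A ≠ ∅ ∧ A ≠ X

/-- A quartet `X` is resolved in an unrooted tree with split system `F` iff the
restriction `T|X` is fully resolved, equivalently iff some split side contains
exactly two of the four elements of `X`. -/
def famResolvedU {n : ℕ} (F : Finset (Finset (Fin n))) (X : Finset (Fin n)) : Prop :=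
  ∃ A ∈ F, (A ∩ X).card = 2

/-- Quartets resolved, identically, in both trees. -/
noncomputable def famSetSU {n : ℕ} (F G : Finset (Finset (Fin n))) :
    Finset (Finset (Fin n)) :=
  (quartets n).filter fun X =>
    famResolvedU F X ∧ famResolvedU G X ∧ famRestrictU F X = famRestrictU G X

/-- Quartets resolved, differently, in both trees. -/
noncomputable def famSetDU {n : ℕ} (F G : Finset (Finset (Fin n))) :
    Finset (Finset (Fin n)) :=
  (quartets n).filter fun X =>
    famResolvedU F X ∧ famResolvedU G X ∧ famRestrictU F X ≠ famRestrictU G X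

/-- Quartets resolved in the first tree but not in the second. -/
noncomputable def famSetR1U {n : ℕ} (F G : Finset (Finset (Fin n))) :
    Finset (Finset (Fin n)) :=
  (quartets n).filter fun X => famResolvedU F X ∧ ¬ famResolvedU G X

/-- Quartets resolved in the second tree but not in the first. -/
noncomputable def famSetR2U {n : ℕ} (F G : Finset (Finset (Fin n))) :
    Finset (Finset (Fin n)) :=
  (quartets n).filter fun X => famResolvedU G X ∧ ¬ famResolvedU F X

/-- Quartets unresolved in both trees. -/
noncomputable def famSetUU {n : ℕ} (F G : Finset (Finset (Fin n))) :
    Finset (Finset (Fin n)) :=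
  (quartets n).filter fun X => ¬ famResolvedU F X ∧ ¬ famResolvedU G X

/-- The parametric quartet distance, at the level of split systems. -/
noncomputable def famPdistU {n : ℕ} (p : ℝ) (F G : Finset (Finset (Fin n))) : ℝ :=
  ((famSetDU F G).card : ℝ) +
    p * (((famSetR1U F G).card : ℝ) + ((famSetR2U F G).card : ℝ))

namespace UTree

variable {n : ℕ}

/-- The split system of the restriction `T|X`. -/
noncomputable def restrict (T : UTree n) (X : Finset (Fin n)) : Finset (Finset (Fin n)) :=
  famRestrictU T.splits X

/-- The quartet `X` is resolved in `T`, i.e. `T|X` is fully resolved. -/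
def Resolved (T : UTree n) (X : Finset (Fin n)) : Prop :=
  famResolvedU T.splits X

/-- An unrooted phylogeny is fully resolved (all internal nodes have degree exactly
three) iff every quartet is resolved in it. -/
def FullyResolved (T : UTree n) : Prop :=
  ∀ X ∈ quartets n, T.Resolved X

noncomputable def setS (T₁ T₂ : UTree n) : Finset (Finset (Fin n)) :=
  famSetSU T₁.splits T₂.splits

noncomputable def setD (T₁ T₂ : UTree n) : Finset (Finset (Fin n)) :=
  famSetDU T₁.splits T₂.splits

noncomputable def setR1 (T₁ T₂ : UTree n) : Finset (Finset (Fin n)) :=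
  famSetR1U T₁.splits T₂.splits

noncomputable def setR2 (T₁ T₂ : UTree n) : Finset (Finset (Fin n)) :=
  famSetR2U T₁.splits T₂.splits

noncomputable def setU (T₁ T₂ : UTree n) : Finset (Finset (Fin n)) :=
  famSetUU T₁.splits T₂.splits

/-- The parametric quartet distance `d⁽ᵖ⁾(T₁,T₂)`. -/
noncomputable def pdist (p : ℝ) (T₁ T₂ : UTree n) : ℝ :=
  famPdistU p T₁.splits T₂.splits

theorem splits_injective : Function.Injective (splits (n := n)) := by
  rintro ⟨s₁, _, _, _, _⟩ ⟨s₂, _, _, _, _⟩ h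
  simp only [mk.injEq] at h ⊢
  exact h

noncomputable instance : Fintype (UTree n) :=
  Fintype.ofInjective splits splits_injective

end UTree

namespace RTree

variable {n : ℕ}

/-- The set `F(T)` of full refinements of `T`: the fully resolved trees from which
`T` can be obtained by contracting internal edges, i.e. whose cluster family
contains that of `T`. -/
def FullRef (T : RTree n) : Set (RTree n) :=
  {t | t.FullyResolved ∧ T.clusters ⊆ t.clusters}

/-- The triplet distance between two (fully resolved) rooted trees: the number of
triplets resolved differently in the two trees. -/
noncomputable def tripletDist (T₁ T₂ : RTree n) : ℝ :=
  ((setD T₁ T₂).card : ℝ)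

/-- The Hausdorff triplet distance between two rooted phylogenies. -/
noncomputable def dHaus (T₁ T₂ : RTree n) : ℝ :=
  max (⨆ t₁ : T₁.FullRef, ⨅ t₂ : T₂.FullRef, tripletDist t₁.1 t₂.1)
      (⨆ t₂ : T₂.FullRef, ⨅ t₁ : T₁.FullRef, tripletDist t₁.1 t₂.1)

end RTree

namespace UTree

variable {n : ℕ}

/-- The set `F(T)` of full refinements of `T`: the fully resolved trees from which
`T` can be obtained by contracting internal edges, i.e. whose split system contains
that of `T`. -/
def FullRef (T : UTree n) : Set (UTree n) :=
  {t | t.FullyResolved ∧ T.splits ⊆ t.splits}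

/-- The quartet distance between two (fully resolved) unrooted trees: the number of
quartets resolved differently in the two trees. -/
noncomputable def quartetDist (T₁ T₂ : UTree n) : ℝ :=
  ((setD T₁ T₂).card : ℝ)

/-- The Hausdorff quartet distance between two unrooted phylogenies. -/
noncomputable def dHaus (T₁ T₂ : UTree n) : ℝ :=
  max (⨆ t₁ : T₁.FullRef, ⨅ t₂ : T₂.FullRef, quartetDist t₁.1 t₂.1)
      (⨆ t₂ : T₂.FullRef, ⨅ t₁ : T₁.FullRef, quartetDist t₁.1 t₂.1)

end UTree

section Counting

variable {n : ℕ}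

private lemma perm_card_swap (σ : Equiv.Perm (Fin n)) (p q : Equiv.Perm (Fin n) → Prop)
    [DecidablePred p] [DecidablePred q]
    (h : ∀ π, p π ↔ q (π * σ)) :
    (Finset.univ.filter p).card = (Finset.univ.filter q).card := by
  apply Finset.card_bij (fun π _ => π * σ)
  · intro π hπ
    simp only [Finset.mem_filter, Finset.mem_univ, true_and] at hπ ⊢
    exact (h π).1 hπ
  · intro a ha b hb hab
    exact mul_right_cancel hab
  · intro b hb
    simp only [Finset.mem_filter, Finset.mem_univ, true_and] at hb
    refine ⟨b * σ⁻¹, ?_, by group⟩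
    simp only [Finset.mem_filter, Finset.mem_univ, true_and]
    rw [h]
    convert hb using 2
    group

lemma perm_count3 {r1 r2 r3 : Fin n} (h12 : r1 ≠ r2) (h13 : r1 ≠ r3) (h23 : r2 ≠ r3) :
    3 * (Finset.univ.filter fun π : Equiv.Perm (Fin n) =>
        π r1 < π r2 ∧ π r1 < π r3).card
      = (Finset.univ : Finset (Equiv.Perm (Fin n))).card := by
  classical
  set E1 := (Finset.univ.filter fun π : Equiv.Perm (Fin n) => π r1 < π r2 ∧ π r1 < π r3) with hE1
  set E2 := (Finset.univ.filter fun π : Equiv.Perm (Fin n) => π r2 < π r1 ∧ π r2 < π r3) with hE2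
  set E3 := (Finset.univ.filter fun π : Equiv.Perm (Fin n) => π r3 < π r1 ∧ π r3 < π r2) with hE3
  have key : ∀ π : Equiv.Perm (Fin n), π r1 ≠ π r2 ∧ π r1 ≠ π r3 ∧ π r2 ≠ π r3 := by
    intro π
    exact ⟨fun h => h12 (π.injective h), fun h => h13 (π.injective h), fun h => h23 (π.injective h)⟩
  have hcard12 : E1.card = E2.card := by
    rw [hE1, hE2]
    apply perm_card_swap (Equiv.swap r1 r2)
    intro π
    simp [Equiv.Perm.mul_apply, Equiv.swap_apply_left, Equiv.swap_apply_right,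
      Equiv.swap_apply_of_ne_of_ne h13.symm h23.symm]
  have hcard13 : E1.card = E3.card := by
    rw [hE1, hE3]
    apply perm_card_swap (Equiv.swap r1 r3)
    intro π
    simp [Equiv.Perm.mul_apply, Equiv.swap_apply_left, Equiv.swap_apply_right,
      Equiv.swap_apply_of_ne_of_ne h12.symm h23, and_comm]
  have hdisj12 : Disjoint E1 E2 := by
    rw [Finset.disjoint_left]
    intro π h1 h2
    simp only [hE1, hE2, Finset.mem_filter] at h1 h2
    exact absurd h2.2.1 (not_lt.2 h1.2.1.le)
  have hdisj3 : Disjoint (E1 ∪ E2) E3 := by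
    rw [Finset.disjoint_left]
    intro π h1 h3
    simp only [hE1, hE2, hE3, Finset.mem_filter, Finset.mem_union] at h1 h3
    rcases h1 with h1 | h1
    · exact absurd h3.2.1 (not_lt.2 h1.2.2.le)
    · exact absurd h3.2.2 (not_lt.2 h1.2.2.le)
  have hcover : E1 ∪ E2 ∪ E3 = Finset.univ := by
    apply Finset.eq_univ_of_forall
    intro π
    obtain ⟨k12, k13, k23⟩ := key π
    simp only [hE1, hE2, hE3, Finset.mem_union, Finset.mem_filter, Finset.mem_univ, true_and]
    rcases lt_trichotomy (π r1) (π r2) with h | h | h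
    · rcases lt_trichotomy (π r1) (π r3) with h' | h' | h'
      · exact Or.inl (Or.inl ⟨h, h'⟩)
      · exact absurd h' k13
      · exact Or.inr ⟨h', h'.trans h⟩
    · exact absurd h k12
    · rcases lt_trichotomy (π r2) (π r3) with h' | h' | h'
      · exact Or.inl (Or.inr ⟨h, h'⟩)
      · exact absurd h' k23
      · exact Or.inr ⟨h'.trans h, h'⟩
  have := congrArg Finset.card hcover
  rw [Finset.card_union_of_disjoint hdisj3, Finset.card_union_of_disjoint hdisj12] at this
  omega

end Counting

section Counting4

variable {n : ℕ}

/-- The event that `w1,w2` lie both below or both above `w3,w4` under `π`. -/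
def bot2 (w1 w2 w3 w4 : Fin n) (π : Equiv.Perm (Fin n)) : Prop :=
  (π w1 < π w3 ∧ π w1 < π w4 ∧ π w2 < π w3 ∧ π w2 < π w4) ∨
  (π w3 < π w1 ∧ π w4 < π w1 ∧ π w3 < π w2 ∧ π w4 < π w2)

set_option maxHeartbeats 1000000 in
lemma perm_count4 {w1 w2 w3 w4 : Fin n} (h12 : w1 ≠ w2) (h13 : w1 ≠ w3) (h14 : w1 ≠ w4)
    (h23 : w2 ≠ w3) (h24 : w2 ≠ w4) (h34 : w3 ≠ w4) :
    3 * (Finset.univ.filter (bot2 w1 w2 w3 w4)).card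
      = (Finset.univ : Finset (Equiv.Perm (Fin n))).card := by
  classical
  set E1 := Finset.univ.filter (bot2 w1 w2 w3 w4) with hE1
  set E2 := Finset.univ.filter (bot2 w1 w3 w2 w4) with hE2
  set E3 := Finset.univ.filter (bot2 w1 w4 w2 w3) with hE3
  have key : ∀ π : Equiv.Perm (Fin n),
      (π w1 : ℕ) ≠ (π w2 : ℕ) ∧ (π w1 : ℕ) ≠ (π w3 : ℕ) ∧ (π w1 : ℕ) ≠ (π w4 : ℕ) ∧
      (π w2 : ℕ) ≠ (π w3 : ℕ) ∧ (π w2 : ℕ) ≠ (π w4 : ℕ) ∧ (π w3 : ℕ) ≠ (π w4 : ℕ) := by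
    intro π
    refine ⟨?_, ?_, ?_, ?_, ?_, ?_⟩ <;>
      simp only [ne_eq, Fin.val_eq_val, EmbeddingLike.apply_eq_iff_eq] <;>
      assumption
  have hcard12 : E1.card = E2.card := by
    rw [hE1, hE2]
    apply perm_card_swap (Equiv.swap w2 w3)
    intro π
    unfold bot2
    simp only [Equiv.Perm.mul_apply, Equiv.swap_apply_left, Equiv.swap_apply_right,
      Equiv.swap_apply_of_ne_of_ne h12 h13,
      Equiv.swap_apply_of_ne_of_ne h24.symm h34.symm]
  have hcard13 : E1.card = E3.card := by
    rw [hE1, hE3]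
    apply perm_card_swap (Equiv.swap w2 w4)
    intro π
    unfold bot2
    simp only [Equiv.Perm.mul_apply, Equiv.swap_apply_left, Equiv.swap_apply_right,
      Equiv.swap_apply_of_ne_of_ne h12 h14,
      Equiv.swap_apply_of_ne_of_ne h23.symm h34]
    tauto
  have hdisj12 : Disjoint E1 E2 := by
    rw [Finset.disjoint_left]
    intro π h1 h2
    simp only [hE1, hE2, Finset.mem_filter, Finset.mem_univ, true_and] at h1 h2
    obtain ⟨k1, k2, k3, k4, k5, k6⟩ := key π
    unfold bot2 at h1 h2
    simp only [Fin.lt_def] at h1 h2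
    omega
  have hdisj3 : Disjoint (E1 ∪ E2) E3 := by
    rw [Finset.disjoint_left]
    intro π h1 h3
    simp only [hE1, hE2, hE3, Finset.mem_filter, Finset.mem_union, Finset.mem_univ,
      true_and] at h1 h3
    obtain ⟨k1, k2, k3, k4, k5, k6⟩ := key π
    unfold bot2 at h1 h3
    simp only [Fin.lt_def] at h1 h3
    omega
  have hcover : E1 ∪ E2 ∪ E3 = Finset.univ := by
    apply Finset.eq_univ_of_forall
    intro π
    obtain ⟨k1, k2, k3, k4, k5, k6⟩ := key π
    simp only [hE1, hE2, hE3, Finset.mem_union, Finset.mem_filter, Finset.mem_univ, true_and]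
    unfold bot2
    simp only [Fin.lt_def]
    omega
  have := congrArg Finset.card hcover
  rw [Finset.card_union_of_disjoint hdisj3, Finset.card_union_of_disjoint hdisj12] at this
  omega

end Counting4

section RootedRestrict

variable {n : ℕ}

lemma mem_famRestrict {F : Finset (Finset (Fin n))} {X S : Finset (Fin n)} :
    S ∈ famRestrict F X ↔ (∃ C ∈ F, C ∩ X = S) ∧ S ≠ ∅ := by
  simp [famRestrict]

lemma triplets_iff {X : Finset (Fin n)} : X ∈ triplets n ↔ X.card = 3 := by
  simp [triplets, Finset.mem_powersetCard_univ]

/-- In a laminar family, two clusters picking out two elements of a triplet pick out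
the same pair. -/
lemma pair_unique (T : RTree n) {X C D : Finset (Fin n)} (hX : X.card = 3)
    (hC : C ∈ T.clusters) (hD : D ∈ T.clusters)
    (h2C : (C ∩ X).card = 2) (h2D : (D ∩ X).card = 2) : C ∩ X = D ∩ X := by
  rcases T.laminar C hC D hD with h | h | h
  · exact Finset.eq_of_subset_of_card_le (Finset.inter_subset_inter h (Finset.Subset.refl X))
      (by omega)
  · exact (Finset.eq_of_subset_of_card_le (Finset.inter_subset_inter h (Finset.Subset.refl X))
      (by omega)).symm
  · exfalso
    have hdisj : Disjoint (C ∩ X) (D ∩ X) := by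
      rw [Finset.disjoint_left]
      intro a haC haD
      have : a ∈ C ∩ D := Finset.mem_inter.2 ⟨(Finset.mem_inter.1 haC).1,
        (Finset.mem_inter.1 haD).1⟩
      simp [h] at this
    have hsub : C ∩ X ∪ D ∩ X ⊆ X :=
      Finset.union_subset Finset.inter_subset_right Finset.inter_subset_right
    have := Finset.card_le_card hsub
    rw [Finset.card_union_of_disjoint hdisj] at this
    omega

lemma mem_restrict_char (T : RTree n) {X C : Finset (Fin n)} (hX : X.card = 3)
    (hC : C ∈ T.clusters) (h2C : (C ∩ X).card = 2) {S : Finset (Fin n)} :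
    S ∈ famRestrict T.clusters X ↔
      S ⊆ X ∧ S ≠ ∅ ∧ (S.card = 2 → S = C ∩ X) := by
  rw [mem_famRestrict]
  constructor
  · rintro ⟨⟨E, hE, rfl⟩, hne⟩
    exact ⟨Finset.inter_subset_right, hne,
      fun h2 => pair_unique T hX hE hC h2 h2C⟩
  · rintro ⟨hsub, hne, h2⟩
    refine ⟨?_, hne⟩
    have hcard : S.card ≤ 3 := hX ▸ Finset.card_le_card hsub
    have hpos : 0 < S.card := Finset.card_pos.2 (Finset.nonempty_of_ne_empty hne)
    interval_cases h : S.card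
    · obtain ⟨x, rfl⟩ := Finset.card_eq_one.1 h
      exact ⟨{x}, T.singleton_mem x, Finset.inter_eq_left.2 (by simpa using hsub)⟩
    · exact ⟨C, hC, (h2 rfl).symm⟩
    · have : S = X := Finset.eq_of_subset_of_card_le hsub (by omega)
      exact ⟨Finset.univ, T.univ_mem, by rw [Finset.univ_inter, this]⟩

/-- Two trees, each resolving the triplet `X`, have equal restrictions to `X` iff the
resolved pairs agree. -/
lemma restrict_eq_iff (T T' : RTree n) {X C D : Finset (Fin n)} (hX : X.card = 3)
    (hC : C ∈ T.clusters) (h2C : (C ∩ X).card = 2)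
    (hD : D ∈ T'.clusters) (h2D : (D ∩ X).card = 2) :
    famRestrict T.clusters X = famRestrict T'.clusters X ↔ C ∩ X = D ∩ X := by
  constructor
  · intro h
    have hmem : C ∩ X ∈ famRestrict T.clusters X :=
      mem_famRestrict.2 ⟨⟨C, hC, rfl⟩, by
        intro he; rw [he] at h2C; simp at h2C⟩
    rw [h, mem_restrict_char T' hX hD h2D] at hmem
    exact hmem.2.2 h2C
  · intro h
    ext S
    rw [mem_restrict_char T hX hC h2C, mem_restrict_char T' hX hD h2D, h]

end RootedRestrict

section Refine

variable {n : ℕ}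

/-- Clusters strictly between `y` and `C`. -/
noncomputable def chdSet (T : RTree n) (C : Finset (Fin n)) (y : Fin n) :
    Finset (Finset (Fin n)) :=
  T.clusters.filter fun D => y ∈ D ∧ D ⊂ C

/-- The child class of `C` containing `y`: a maximal proper subcluster of `C`
containing `y` (or `{y}` if there is none). -/
noncomputable def chd (T : RTree n) (C : Finset (Fin n)) (y : Fin n) : Finset (Fin n) :=
  if h : (chdSet T C y).Nonempty then
    (Finset.exists_max_image (chdSet T C y) Finset.card h).choose
  else {y}

lemma chd_spec (T : RTree n) (C : Finset (Fin n)) (y : Fin n)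
    (h : (chdSet T C y).Nonempty) :
    chd T C y ∈ chdSet T C y ∧ ∀ D ∈ chdSet T C y, D.card ≤ (chd T C y).card := by
  rw [chd, dif_pos h]
  obtain ⟨h1, h2⟩ := (Finset.exists_max_image (chdSet T C y) Finset.card h).choose_spec
  exact ⟨h1, h2⟩

lemma mem_chdSet {T : RTree n} {C D : Finset (Fin n)} {y : Fin n} :
    D ∈ chdSet T C y ↔ D ∈ T.clusters ∧ y ∈ D ∧ D ⊂ C := by
  simp [chdSet]

lemma mem_chd (T : RTree n) (C : Finset (Fin n)) (y : Fin n) : y ∈ chd T C y := by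
  by_cases h : (chdSet T C y).Nonempty
  · exact (mem_chdSet.1 (chd_spec T C y h).1).2.1
  · rw [chd, dif_neg h]; exact Finset.mem_singleton_self y

lemma chd_subset (T : RTree n) {C : Finset (Fin n)} {y : Fin n} (hy : y ∈ C) :
    chd T C y ⊆ C := by
  by_cases h : (chdSet T C y).Nonempty
  · exact (mem_chdSet.1 (chd_spec T C y h).1).2.2.subset
  · rw [chd, dif_neg h]; simpa using hy

lemma chd_mem_clusters (T : RTree n) {C : Finset (Fin n)} {y : Fin n} :
    chd T C y ∈ T.clusters := by
  by_cases h : (chdSet T C y).Nonempty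
  · exact (mem_chdSet.1 (chd_spec T C y h).1).1
  · rw [chd, dif_neg h]; exact T.singleton_mem y

lemma chd_max (T : RTree n) {C D : Finset (Fin n)} {y : Fin n}
    (hD : D ∈ T.clusters) (hyD : y ∈ D) (hDC : D ⊂ C) : D ⊆ chd T C y := by
  have hne : (chdSet T C y).Nonempty := ⟨D, mem_chdSet.2 ⟨hD, hyD, hDC⟩⟩
  obtain ⟨hmem, hmax⟩ := chd_spec T C y hne
  obtain ⟨hcl, hych, hch⟩ := mem_chdSet.1 hmem
  rcases T.laminar D hD _ hcl with h | h | h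
  · exact h
  · have := hmax D (mem_chdSet.2 ⟨hD, hyD, hDC⟩)
    rw [Finset.eq_of_subset_of_card_le h this]
  · exfalso
    have : y ∈ D ∩ chd T C y := Finset.mem_inter.2 ⟨hyD, hych⟩
    simp [h] at this

lemma chd_proper (T : RTree n) {C : Finset (Fin n)} {y : Fin n}
    (hC : C ∈ T.clusters) (hy : y ∈ C) (h2 : 2 ≤ C.card) :
    chd T C y ⊂ C := by
  have hne : (chdSet T C y).Nonempty := by
    refine ⟨{y}, mem_chdSet.2 ⟨T.singleton_mem y, Finset.mem_singleton_self y, ?_⟩⟩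
    rw [Finset.ssubset_iff_subset_ne]
    refine ⟨by simpa using hy, ?_⟩
    intro h
    rw [← h] at h2
    simp at h2
  exact (mem_chdSet.1 (chd_spec T C y hne).1).2.2

lemma chd_eq (T : RTree n) {C : Finset (Fin n)} {y z : Fin n}
    (hC : C ∈ T.clusters) (hy : y ∈ C) (hz : z ∈ chd T C y) :
    chd T C z = chd T C y := by
  by_cases hne : (chdSet T C y).Nonempty
  · obtain ⟨hmem, _⟩ := chd_spec T C y hne
    obtain ⟨hcl, hych, hch⟩ := mem_chdSet.1 hmem
    have h1 : chd T C y ⊆ chd T C z := chd_max T hcl hz hch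
    have hyz : y ∈ chd T C z := h1 (mem_chd T C y)
    have hnez : (chdSet T C z).Nonempty := ⟨chd T C y, mem_chdSet.2 ⟨hcl, hz, hch⟩⟩
    obtain ⟨hmemz, _⟩ := chd_spec T C z hnez
    obtain ⟨hclz, hzch, hchz⟩ := mem_chdSet.1 hmemz
    exact Finset.Subset.antisymm (chd_max T hclz hyz hchz) h1
  · have hz' : z = y := by
      rw [chd, dif_neg hne] at hz
      simpa using hz
    subst hz'
    rfl

/-- The representative of the child class of `C` containing `y`. -/
noncomputable def rp (T : RTree n) (C : Finset (Fin n)) (y : Fin n) : Fin n :=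
  (insert y (chd T C y)).min' (Finset.insert_nonempty _ _)

lemma rp_def (T : RTree n) (C : Finset (Fin n)) (y : Fin n) :
    rp T C y = (chd T C y).min' ⟨y, mem_chd T C y⟩ := by
  rw [rp]
  congr 1
  exact Finset.insert_eq_self.2 (mem_chd T C y)

lemma rp_mem (T : RTree n) (C : Finset (Fin n)) (y : Fin n) : rp T C y ∈ chd T C y := by
  rw [rp_def]; exact Finset.min'_mem _ _

lemma rp_eq_of_mem_chd (T : RTree n) {C : Finset (Fin n)} {y z : Fin n}
    (hC : C ∈ T.clusters) (hy : y ∈ C) (hz : z ∈ chd T C y) :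
    rp T C z = rp T C y := by
  rw [rp_def, rp_def]
  congr 1
  exact chd_eq T hC hy hz

lemma rp_ne (T : RTree n) {C : Finset (Fin n)} {y z : Fin n}
    (hC : C ∈ T.clusters) (hy : y ∈ C) (hz : z ∈ C)
    (hchd : chd T C y ≠ chd T C z) : rp T C y ≠ rp T C z := by
  intro h
  apply hchd
  have h1 : rp T C y ∈ chd T C y := rp_mem T C y
  have h2 : rp T C y ∈ chd T C z := h ▸ rp_mem T C z
  rw [← chd_eq T hC hy h1, ← chd_eq T hC hz h2]

/-- Representatives of distinct elements of `X ∩ C` are distinct, when no proper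
subcluster of `C` contains two elements of `X`. -/
lemma rp_injOn (T : RTree n) {C X : Finset (Fin n)} (hC : C ∈ T.clusters)
    (hmin : ∀ D ∈ T.clusters, D ⊂ C → (D ∩ X).card ≤ 1)
    {y z : Fin n} (hy : y ∈ C ∩ X) (hz : z ∈ C ∩ X) (hyz : y ≠ z) :
    rp T C y ≠ rp T C z := by
  obtain ⟨hyC, hyX⟩ := Finset.mem_inter.1 hy
  obtain ⟨hzC, hzX⟩ := Finset.mem_inter.1 hz
  have h2 : 2 ≤ C.card := by
    have hss : ({y, z} : Finset (Fin n)) ⊆ C := by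
      rw [Finset.insert_subset_iff, Finset.singleton_subset_iff]
      exact ⟨hyC, hzC⟩
    have := Finset.card_le_card hss
    rwa [Finset.card_insert_of_notMem (by simpa using hyz), Finset.card_singleton] at this
  apply rp_ne T hC hyC hzC
  intro h
  have hprop := chd_proper T hC hyC h2
  have hcard := hmin (chd T C y) (chd_mem_clusters T) hprop
  have hsub : {y, z} ⊆ chd T C y ∩ X := by
    rw [Finset.insert_subset_iff, Finset.singleton_subset_iff]
    exact ⟨Finset.mem_inter.2 ⟨mem_chd T C y, hyX⟩,
      Finset.mem_inter.2 ⟨h ▸ mem_chd T C z, hzX⟩⟩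
  have := Finset.card_le_card hsub
  rw [Finset.card_insert_of_notMem (by simpa using hyz), Finset.card_singleton] at this
  omega

/-- The suffix set of the caterpillar refinement at `C` with threshold `t`. -/
noncomputable def suf (T : RTree n) (π : Equiv.Perm (Fin n)) (C : Finset (Fin n))
    (t : Fin n) : Finset (Fin n) :=
  C.filter fun y => π (rp T C t) ≤ π (rp T C y)

lemma suf_subset (T : RTree n) (π : Equiv.Perm (Fin n)) (C : Finset (Fin n)) (t : Fin n) :
    suf T π C t ⊆ C := Finset.filter_subset _ _

lemma mem_suf {T : RTree n} {π : Equiv.Perm (Fin n)} {C : Finset (Fin n)} {t y : Fin n} :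
    y ∈ suf T π C t ↔ y ∈ C ∧ π (rp T C t) ≤ π (rp T C y) := by
  simp [suf]

lemma mem_suf_self (T : RTree n) (π : Equiv.Perm (Fin n)) {C : Finset (Fin n)} {t : Fin n}
    (ht : t ∈ C) : t ∈ suf T π C t := mem_suf.2 ⟨ht, le_refl _⟩

/-- A cluster strictly inside `C` is entirely inside or outside each suffix set of `C`. -/
lemma suf_block (T : RTree n) (π : Equiv.Perm (Fin n)) {C D : Finset (Fin n)} {t : Fin n}
    (hC : C ∈ T.clusters) (hD : D ∈ T.clusters) (hDC : D ⊂ C) (hDne : D ≠ ∅) :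
    D ⊆ suf T π C t ∨ D ∩ suf T π C t = ∅ := by
  obtain ⟨w, hw⟩ := Finset.nonempty_of_ne_empty hDne
  have hwC : w ∈ C := hDC.subset hw
  have hsub : D ⊆ chd T C w := chd_max T hD hw hDC
  have hkey : ∀ z ∈ D, rp T C z = rp T C w := fun z hz =>
    rp_eq_of_mem_chd T hC hwC (hsub hz)
  by_cases hle : π (rp T C t) ≤ π (rp T C w)
  · left
    intro z hz
    exact mem_suf.2 ⟨hDC.subset hz, (hkey z hz).symm ▸ hle⟩
  · right
    rw [Finset.eq_empty_iff_forall_notMem]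
    intro z hz
    obtain ⟨hzD, hzS⟩ := Finset.mem_inter.1 hz
    exact hle ((hkey z hzD) ▸ (mem_suf.1 hzS).2)

lemma suf_mono (T : RTree n) (π : Equiv.Perm (Fin n)) {C : Finset (Fin n)} {t t' : Fin n}
    (h : π (rp T C t) ≤ π (rp T C t')) : suf T π C t' ⊆ suf T π C t := by
  intro y hy
  obtain ⟨h1, h2⟩ := mem_suf.1 hy
  exact mem_suf.2 ⟨h1, h.trans h2⟩

/-- The caterpillar refinement of the cluster family of `T`, according to `π`. -/
noncomputable def refFam (T : RTree n) (π : Equiv.Perm (Fin n)) :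
    Finset (Finset (Fin n)) :=
  T.clusters ∪ T.clusters.biUnion fun C => C.image fun t => suf T π C t

lemma mem_refFam {T : RTree n} {π : Equiv.Perm (Fin n)} {S : Finset (Fin n)} :
    S ∈ refFam T π ↔ S ∈ T.clusters ∨ ∃ C ∈ T.clusters, ∃ t ∈ C, S = suf T π C t := by
  simp only [refFam, Finset.mem_union, Finset.mem_biUnion, Finset.mem_image]
  constructor
  · rintro (h | ⟨C, hC, t, ht, rfl⟩)
    · exact Or.inl h
    · exact Or.inr ⟨C, hC, t, ht, rfl⟩
  · rintro (h | ⟨C, hC, t, ht, rfl⟩)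
    · exact Or.inl h
    · exact Or.inr ⟨C, hC, t, ht, rfl⟩

lemma clusters_subset_refFam (T : RTree n) (π : Equiv.Perm (Fin n)) :
    T.clusters ⊆ refFam T π := Finset.subset_union_left

lemma refFam_nonempty_mem (T : RTree n) (π : Equiv.Perm (Fin n)) {S : Finset (Fin n)}
    (hS : S ∈ refFam T π) : S ≠ ∅ := by
  rcases mem_refFam.1 hS with h | ⟨C, hC, t, ht, rfl⟩
  · intro he; exact T.empty_not_mem (he ▸ h)
  · intro he
    have := mem_suf_self T π ht
    rw [he] at this
    simp at this

lemma refFam_laminar (T : RTree n) (π : Equiv.Perm (Fin n)) :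
    ∀ A ∈ refFam T π, ∀ B ∈ refFam T π, A ⊆ B ∨ B ⊆ A ∨ A ∩ B = ∅ := by
  have aux : ∀ D ∈ T.clusters, ∀ C ∈ T.clusters, ∀ t ∈ C,
      D ⊆ suf T π C t ∨ suf T π C t ⊆ D ∨ D ∩ suf T π C t = ∅ := by
    intro D hD C hC t ht
    rcases T.laminar D hD C hC with h | h | h
    · rcases eq_or_ne D C with rfl | hne'
      · exact Or.inr (Or.inl (suf_subset T π D t))
      · rcases suf_block T π hC hD (Finset.ssubset_iff_subset_ne.2 ⟨h, hne'⟩)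
            (fun he => T.empty_not_mem (he ▸ hD)) with h' | h'
        · exact Or.inl h'
        · exact Or.inr (Or.inr h')
    · exact Or.inr (Or.inl ((suf_subset T π C t).trans h))
    · refine Or.inr (Or.inr ?_)
      rw [Finset.eq_empty_iff_forall_notMem]
      intro z hz
      obtain ⟨h1, h2⟩ := Finset.mem_inter.1 hz
      have : z ∈ D ∩ C := Finset.mem_inter.2 ⟨h1, suf_subset T π C t h2⟩
      simp [h] at this
  intro A hA B hB
  rcases mem_refFam.1 hA with hA' | ⟨C, hC, t, ht, rfl⟩ <;>
    rcases mem_refFam.1 hB with hB' | ⟨C', hC', t', ht', rfl⟩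
  · exact T.laminar A hA' B hB'
  · rcases aux A hA' C' hC' t' ht' with h | h | h
    · exact Or.inl h
    · exact Or.inr (Or.inl h)
    · exact Or.inr (Or.inr h)
  · rcases aux B hB' C hC t ht with h | h | h
    · exact Or.inr (Or.inl h)
    · exact Or.inl h
    · refine Or.inr (Or.inr ?_)
      rw [Finset.inter_comm]
      exact h
  · by_cases hCC : C = C'
    · subst hCC
      rcases le_total (π (rp T C t)) (π (rp T C t')) with h | h
      · exact Or.inr (Or.inl (suf_mono T π h))
      · exact Or.inl (suf_mono T π h)
    · rcases T.laminar C hC C' hC' with h | h | h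
      · have hss : C ⊂ C' := Finset.ssubset_iff_subset_ne.2 ⟨h, hCC⟩
        rcases suf_block T π (t := t') hC' hC hss
            (fun he => T.empty_not_mem (he ▸ hC)) with h' | h'
        · exact Or.inl ((suf_subset T π C t).trans h')
        · refine Or.inr (Or.inr ?_)
          rw [Finset.eq_empty_iff_forall_notMem]
          intro z hz
          obtain ⟨h1, h2⟩ := Finset.mem_inter.1 hz
          have : z ∈ C ∩ suf T π C' t' := Finset.mem_inter.2 ⟨suf_subset T π C t h1, h2⟩
          rw [h'] at this
          simp at this
      · have hss : C' ⊂ C := Finset.ssubset_iff_subset_ne.2 ⟨h, fun he => hCC he.symm⟩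
        rcases suf_block T π (t := t) hC hC' hss
            (fun he => T.empty_not_mem (he ▸ hC')) with h' | h'
        · exact Or.inr (Or.inl ((suf_subset T π C' t').trans h'))
        · refine Or.inr (Or.inr ?_)
          rw [Finset.eq_empty_iff_forall_notMem]
          intro z hz
          obtain ⟨h1, h2⟩ := Finset.mem_inter.1 hz
          have : z ∈ C' ∩ suf T π C t := Finset.mem_inter.2 ⟨suf_subset T π C' t' h2, h1⟩
          rw [h'] at this
          simp at this
      · refine Or.inr (Or.inr ?_)
        rw [Finset.eq_empty_iff_forall_notMem]
        intro z hz
        obtain ⟨h1, h2⟩ := Finset.mem_inter.1 hz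
        have : z ∈ C ∩ C' := Finset.mem_inter.2
          ⟨suf_subset T π C t h1, suf_subset T π C' t' h2⟩
        simp [h] at this

/-- The caterpillar refinement of `T` along `π`, as a rooted tree. -/
noncomputable def refTree (T : RTree n) (π : Equiv.Perm (Fin n)) : RTree n where
  clusters := refFam T π
  univ_mem := clusters_subset_refFam T π T.univ_mem
  singleton_mem := fun x => clusters_subset_refFam T π (T.singleton_mem x)
  empty_not_mem := fun h => refFam_nonempty_mem T π h rfl
  laminar := refFam_laminar T π

lemma refTree_clusters (T : RTree n) (π : Equiv.Perm (Fin n)) :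
    (refTree T π).clusters = refFam T π := rfl

end Refine

section Structure

variable {n : ℕ}

lemma suf_inter_eq (T : RTree n) (π : Equiv.Perm (Fin n)) {C X : Finset (Fin n)}
    {t : Fin n} :
    suf T π C t ∩ X = (C ∩ X).filter fun y => π (rp T C t) ≤ π (rp T C y) := by
  ext y
  simp only [Finset.mem_inter, Finset.mem_filter, mem_suf]
  tauto

/-- If `x0` has the strictly smallest representative key among `C ∩ X`, then some set
of the refined family meets `X` exactly in `(C ∩ X).erase x0`. -/
lemma exists_suf_inter (T : RTree n) (π : Equiv.Perm (Fin n)) {C X : Finset (Fin n)}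
    {x0 : Fin n} (hC : C ∈ T.clusters) (hx0 : x0 ∈ C ∩ X)
    (h2 : 2 ≤ (C ∩ X).card)
    (hmin : ∀ w ∈ C ∩ X, w ≠ x0 → π (rp T C x0) < π (rp T C w)) :
    ∃ S ∈ refFam T π, S ∩ X = (C ∩ X).erase x0 := by
  have hne : ((C ∩ X).erase x0).Nonempty := by
    rw [← Finset.card_pos, Finset.card_erase_of_mem hx0]
    omega
  obtain ⟨m, hm, hmmin⟩ := Finset.exists_min_image ((C ∩ X).erase x0)
    (fun y => π (rp T C y)) hne
  obtain ⟨hmne, hmCX⟩ := Finset.mem_erase.1 hm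
  refine ⟨suf T π C m, mem_refFam.2 (Or.inr ⟨C, hC, m, (Finset.mem_inter.1 hmCX).1, rfl⟩), ?_⟩
  rw [suf_inter_eq]
  ext y
  simp only [Finset.mem_filter, Finset.mem_erase]
  constructor
  · rintro ⟨hyCX, hle⟩
    refine ⟨?_, hyCX⟩
    rintro rfl
    exact absurd hle (not_le.2 (hmin m hmCX hmne))
  · rintro ⟨hyne, hyCX⟩
    exact ⟨hyCX, hmmin y (Finset.mem_erase.2 ⟨hyne, hyCX⟩)⟩

/-- Existence of a minimal cluster meeting `X` in at least two elements. -/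
lemma exists_minimal_cluster (T : RTree n) {X : Finset (Fin n)} (h2 : 2 ≤ X.card) :
    ∃ C ∈ T.clusters, 2 ≤ (C ∩ X).card ∧
      ∀ D ∈ T.clusters, 2 ≤ (D ∩ X).card → C.card ≤ D.card := by
  have hne : (T.clusters.filter fun C => 2 ≤ (C ∩ X).card).Nonempty := by
    refine ⟨Finset.univ, Finset.mem_filter.2 ⟨T.univ_mem, ?_⟩⟩
    rwa [Finset.univ_inter]
  obtain ⟨C, hC, hmin⟩ := Finset.exists_min_image _ Finset.card hne
  obtain ⟨hC1, hC2⟩ := Finset.mem_filter.1 hC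
  exact ⟨C, hC1, hC2, fun D hD h2D => hmin D (Finset.mem_filter.2 ⟨hD, h2D⟩)⟩

lemma minimal_property {T : RTree n} {X C : Finset (Fin n)}
    (hmin : ∀ D ∈ T.clusters, 2 ≤ (D ∩ X).card → C.card ≤ D.card) :
    ∀ D ∈ T.clusters, D ⊂ C → (D ∩ X).card ≤ 1 := by
  intro D hD hDC
  by_contra h
  push_neg at h
  exact absurd (Finset.card_lt_card hDC) (not_lt.2 (hmin D hD h))

/-- An unresolved set `X` of at most 4 elements: any refined-family member meeting `X`
in exactly two elements meets it in an "upper set" of representative keys at the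
minimal cluster `C`. -/
lemma refFam_pair_structure (T : RTree n) (π : Equiv.Perm (Fin n))
    {X C S : Finset (Fin n)} (hX4 : X.card ≤ 4)
    (hunres : ¬ famResolved T.clusters X)
    (hC : C ∈ T.clusters) (h2C : 2 ≤ (C ∩ X).card)
    (hmin : ∀ D ∈ T.clusters, 2 ≤ (D ∩ X).card → C.card ≤ D.card)
    (hS : S ∈ refFam T π) (hS2 : (S ∩ X).card = 2) :
    ∃ t ∈ C ∩ X, S ∩ X = (C ∩ X).filter fun y => π (rp T C t) ≤ π (rp T C y) := by
  have h3C : 3 ≤ (C ∩ X).card := by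
    rcases Nat.lt_or_ge (C ∩ X).card 3 with h | h
    · exfalso
      have : (C ∩ X).card = 2 := by omega
      exact hunres ⟨C, hC, this⟩
    · exact h
  rcases mem_refFam.1 hS with hS' | ⟨C', hC', t', ht', rfl⟩
  · exact absurd ⟨S, hS', hS2⟩ hunres
  · -- S = suf T π C' t'
    have h2C' : 2 ≤ (C' ∩ X).card := by
      have hsub : suf T π C' t' ∩ X ⊆ C' ∩ X :=
        Finset.inter_subset_inter (suf_subset T π C' t') (Finset.Subset.refl X)
      have := Finset.card_le_card hsub
      omega
    have h3C' : 3 ≤ (C' ∩ X).card := by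
      rcases Nat.lt_or_ge (C' ∩ X).card 3 with h | h
      · exfalso
        have : (C' ∩ X).card = 2 := by omega
        exact hunres ⟨C', hC', this⟩
      · exact h
    have hcard : C.card ≤ C'.card := hmin C' hC' h2C'
    -- C and C' intersect (within X)
    have hinter : (C ∩ C') ≠ ∅ := by
      intro hdisj
      have hsub : (C ∩ X) ∪ (C' ∩ X) ⊆ X :=
        Finset.union_subset Finset.inter_subset_right Finset.inter_subset_right
      have hdis : Disjoint (C ∩ X) (C' ∩ X) := by
        rw [Finset.disjoint_left]
        intro a h1 h2
        have : a ∈ C ∩ C' := Finset.mem_inter.2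
          ⟨(Finset.mem_inter.1 h1).1, (Finset.mem_inter.1 h2).1⟩
        rw [hdisj] at this
        simp at this
      have := Finset.card_le_card hsub
      rw [Finset.card_union_of_disjoint hdis] at this
      omega
    have hCC' : C ⊆ C' := by
      rcases T.laminar C hC C' hC' with h | h | h
      · exact h
      · rw [Finset.eq_of_subset_of_card_le h hcard]
      · exact absurd h hinter
    rcases eq_or_ne C C' with rfl | hne
    · -- same cluster: take the minimum of S ∩ X as threshold
      have hSne : (suf T π C t' ∩ X).Nonempty := by
        rw [← Finset.card_pos, hS2]; omega
      obtain ⟨t, ht, htmin⟩ := Finset.exists_min_image _ (fun y => π (rp T C y)) hSne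
      have htCX : t ∈ C ∩ X :=
        Finset.inter_subset_inter (suf_subset T π C t') (Finset.Subset.refl X) ht
      refine ⟨t, htCX, ?_⟩
      ext y
      simp only [Finset.mem_filter]
      constructor
      · intro hy
        exact ⟨Finset.inter_subset_inter (suf_subset T π C t') (Finset.Subset.refl X) hy,
          htmin y hy⟩
      · rintro ⟨hyCX, hle⟩
        obtain ⟨hyC, hyX⟩ := Finset.mem_inter.1 hyCX
        have ht' : π (rp T C t') ≤ π (rp T C t) :=
          (mem_suf.1 (Finset.mem_inter.1 ht).1).2
        exact Finset.mem_inter.2 ⟨mem_suf.2 ⟨hyC, ht'.trans hle⟩, hyX⟩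
    · -- C ⊊ C' : impossible since then S ∩ X has size ≠ 2
      exfalso
      have hss : C ⊂ C' := Finset.ssubset_iff_subset_ne.2 ⟨hCC', hne⟩
      obtain ⟨w, hw⟩ : (C ∩ X).Nonempty := by rw [← Finset.card_pos]; omega
      obtain ⟨hwC, hwX⟩ := Finset.mem_inter.1 hw
      have hwC' : w ∈ C' := hCC' hwC
      have hchd : C ⊆ chd T C' w := chd_max T hC hwC hss
      have hkey : ∀ z ∈ C, rp T C' z = rp T C' w := fun z hz =>
        rp_eq_of_mem_chd T hC' hwC' (hchd hz)
      -- the elements of C ∩ X are all in S or all out of S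
      by_cases hin : π (rp T C' t') ≤ π (rp T C' w)
      · -- all of C ∩ X inside S, so |S ∩ X| ≥ 3
        have hsub : C ∩ X ⊆ suf T π C' t' ∩ X := by
          intro z hz
          obtain ⟨hzC, hzX⟩ := Finset.mem_inter.1 hz
          exact Finset.mem_inter.2
            ⟨mem_suf.2 ⟨hCC' hzC, (hkey z hzC).symm ▸ hin⟩, hzX⟩
        have := Finset.card_le_card hsub
        omega
      · -- all of C ∩ X outside S, so |S ∩ X| ≤ |X| - |C ∩ X| ≤ 1
        have hsub : suf T π C' t' ∩ X ⊆ X \ (C ∩ X) := by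
          intro z hz
          obtain ⟨hzS, hzX⟩ := Finset.mem_inter.1 hz
          rw [Finset.mem_sdiff]
          refine ⟨hzX, ?_⟩
          intro hzCX
          obtain ⟨hzC, _⟩ := Finset.mem_inter.1 hzCX
          exact hin ((hkey z hzC) ▸ (mem_suf.1 hzS).2)
        have h1 := Finset.card_le_card hsub
        have h2 := Finset.card_sdiff_of_subset (Finset.inter_subset_right : C ∩ X ⊆ X)
        omega

/-- Every triplet is resolved in the caterpillar refinement. -/
lemma refFam_resolves (T : RTree n) (π : Equiv.Perm (Fin n)) {X : Finset (Fin n)}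
    (hX : X.card = 3) : famResolved (refFam T π) X := by
  by_cases hres : famResolved T.clusters X
  · obtain ⟨C, hC, h2⟩ := hres
    exact ⟨C, clusters_subset_refFam T π hC, h2⟩
  · obtain ⟨C, hC, h2C, hmin⟩ := exists_minimal_cluster T (X := X) (by omega)
    have hminp := minimal_property hmin
    have h3C : (C ∩ X).card = 3 := by
      have hle : (C ∩ X).card ≤ 3 := hX ▸ Finset.card_le_card Finset.inter_subset_right
      rcases Nat.lt_or_ge (C ∩ X).card 3 with h | h
      · exfalso
        have : (C ∩ X).card = 2 := by omega
        exact hres ⟨C, hC, this⟩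
      · omega
    obtain ⟨x0, hx0, hx0min⟩ := Finset.exists_min_image (C ∩ X)
      (fun y => π (rp T C y)) (by rw [← Finset.card_pos]; omega)
    have hstrict : ∀ w ∈ C ∩ X, w ≠ x0 → π (rp T C x0) < π (rp T C w) := by
      intro w hw hwne
      have hle := hx0min w hw
      rcases lt_or_eq_of_le hle with h | h
      · exact h
      · exfalso
        exact rp_injOn T hC hminp hw hx0 hwne (π.injective h.symm)
    obtain ⟨S, hS, hSX⟩ := exists_suf_inter T π hC hx0 (by omega) hstrict
    refine ⟨S, hS, ?_⟩
    rw [hSX, Finset.card_erase_of_mem hx0, h3C]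

lemma refTree_fullyResolved (T : RTree n) (π : Equiv.Perm (Fin n)) :
    (refTree T π).FullyResolved := by
  intro X hX
  exact refFam_resolves T π (triplets_iff.1 hX)

lemma refTree_mem_FullRef (T : RTree n) (π : Equiv.Perm (Fin n)) :
    refTree T π ∈ T.FullRef :=
  ⟨refTree_fullyResolved T π, clusters_subset_refFam T π⟩

end Structure

section RootedKey

variable {n : ℕ}

lemma mem_setD {A B : RTree n} {X : Finset (Fin n)} :
    X ∈ RTree.setD A B ↔ X ∈ triplets n ∧ famResolved A.clusters X ∧
      famResolved B.clusters X ∧ famRestrict A.clusters X ≠ famRestrict B.clusters X := by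
  simp only [RTree.setD, famSetD, Finset.mem_filter, and_assoc, ne_eq]

lemma mem_setR2 {A B : RTree n} {X : Finset (Fin n)} :
    X ∈ RTree.setR2 A B ↔ X ∈ triplets n ∧ famResolved B.clusters X ∧
      ¬ famResolved A.clusters X := by
  simp only [RTree.setR2, famSetR2, Finset.mem_filter, and_assoc]

lemma rooted_match_count (T1 T2 : RTree n) {X : Finset (Fin n)}
    (hX : X ∈ RTree.setR2 T1 T2) :
    3 * (Finset.univ.filter fun π : Equiv.Perm (Fin n) =>
        famRestrict (refFam T1 π) X = famRestrict T2.clusters X).card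
      = (Finset.univ : Finset (Equiv.Perm (Fin n))).card := by
  obtain ⟨htr, ⟨D2, hD2, h2D2⟩, hunres⟩ := mem_setR2.1 hX
  have hX3 : X.card = 3 := triplets_iff.1 htr
  -- extract x0, the element of X outside the resolved pair of T2
  have hPsub : D2 ∩ X ⊆ X := Finset.inter_subset_right
  have hsd : (X \ (D2 ∩ X)).card = 1 := by
    rw [Finset.card_sdiff_of_subset hPsub]; omega
  obtain ⟨x0, hx0⟩ := Finset.card_eq_one.1 hsd
  have hx0X : x0 ∈ X := by
    have := Finset.mem_singleton_self x0
    rw [← hx0, Finset.mem_sdiff] at this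
    exact this.1
  have hPX : D2 ∩ X = X.erase x0 := by
    have h := Finset.sdiff_sdiff_eq_self hPsub
    rw [hx0] at h
    rw [← h, Finset.erase_eq]
  obtain ⟨w1, w2, hw12, hw⟩ := Finset.card_eq_two.1
    (show (X.erase x0).card = 2 by rw [Finset.card_erase_of_mem hx0X]; omega)
  have hw1m : w1 ∈ X.erase x0 := by rw [hw]; simp
  have hw2m : w2 ∈ X.erase x0 := by rw [hw]; simp
  have hw1X : w1 ∈ X := Finset.erase_subset _ _ hw1m
  have hw2X : w2 ∈ X := Finset.erase_subset _ _ hw2m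
  have hw1x0 : w1 ≠ x0 := (Finset.mem_erase.1 hw1m).1
  have hw2x0 : w2 ≠ x0 := (Finset.mem_erase.1 hw2m).1
  -- minimal cluster
  obtain ⟨C0, hC0, h2C0, hmin⟩ := exists_minimal_cluster T1 (X := X) (by omega)
  have hminp := minimal_property hmin
  have hC0X : C0 ∩ X = X := by
    apply Finset.eq_of_subset_of_card_le Finset.inter_subset_right
    have hle : (C0 ∩ X).card ≤ 3 := hX3 ▸ Finset.card_le_card Finset.inter_subset_right
    rcases Nat.lt_or_ge (C0 ∩ X).card 3 with h | h
    · exfalso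
      have : (C0 ∩ X).card = 2 := by omega
      exact hunres ⟨C0, hC0, this⟩
    · omega
  have hmemCX : ∀ y ∈ X, y ∈ C0 ∩ X := fun y hy => by rw [hC0X]; exact hy
  -- representatives
  set r : Fin n → Fin n := fun y => rp T1 C0 y with hr
  have hr01 : r x0 ≠ r w1 := rp_injOn T1 hC0 hminp (hmemCX _ hx0X) (hmemCX _ hw1X) hw1x0.symm
  have hr02 : r x0 ≠ r w2 := rp_injOn T1 hC0 hminp (hmemCX _ hx0X) (hmemCX _ hw2X) hw2x0.symm
  have hr12 : r w1 ≠ r w2 := rp_injOn T1 hC0 hminp (hmemCX _ hw1X) (hmemCX _ hw2X) hw12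
  have hiff : ∀ π : Equiv.Perm (Fin n),
      (famRestrict (refFam T1 π) X = famRestrict T2.clusters X) ↔
        (π (r x0) < π (r w1) ∧ π (r x0) < π (r w2)) := by
    intro π
    constructor
    · intro h
      obtain ⟨S, hS, hS2⟩ := refFam_resolves T1 π hX3
      have heq : S ∩ X = D2 ∩ X :=
        (restrict_eq_iff (refTree T1 π) T2 hX3 hS hS2 hD2 h2D2).1 h
      obtain ⟨t, htCX, hSX⟩ := refFam_pair_structure T1 π (by omega) hunres hC0 h2C0
        hmin hS hS2
      rw [heq, hPX] at hSX
      have hx0lt : π (r x0) < π (r t) := by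
        have hnot : x0 ∉ X.erase x0 := Finset.notMem_erase x0 X
        rw [hSX] at hnot
        simp only [Finset.mem_filter] at hnot
        push_neg at hnot
        exact hnot (hmemCX _ hx0X)
      constructor
      · have : w1 ∈ X.erase x0 := hw1m
        rw [hSX] at this
        simp only [Finset.mem_filter] at this
        exact hx0lt.trans_le this.2
      · have : w2 ∈ X.erase x0 := hw2m
        rw [hSX] at this
        simp only [Finset.mem_filter] at this
        exact hx0lt.trans_le this.2
    · rintro ⟨h1, h2⟩
      have hstrict : ∀ w ∈ C0 ∩ X, w ≠ x0 → π (rp T1 C0 x0) < π (rp T1 C0 w) := by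
        intro w hwCX hwne
        have hwX : w ∈ X := (Finset.mem_inter.1 hwCX).2
        have : w ∈ X.erase x0 := Finset.mem_erase.2 ⟨hwne, hwX⟩
        rw [hw] at this
        rcases Finset.mem_insert.1 this with rfl | h'
        · exact h1
        · rw [Finset.mem_singleton] at h'
          subst h'
          exact h2
      obtain ⟨S, hS, hSX⟩ := exists_suf_inter T1 π hC0 (hmemCX _ hx0X)
        (by rw [hC0X]; omega) hstrict
      have hSX' : S ∩ X = D2 ∩ X := by rw [hSX, hC0X, hPX]
      have hS2 : (S ∩ X).card = 2 := by
        rw [hSX', hPX, Finset.card_erase_of_mem hx0X, hX3]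
      exact (restrict_eq_iff (refTree T1 π) T2 hX3 hS hS2 hD2 h2D2).2 hSX'
  rw [Finset.filter_congr (fun π _ => hiff π)]
  exact perm_count3 hr01 hr02 hr12

lemma rooted_key (T1 T2 : RTree n) :
    ((RTree.setD T1 T2).card : ℝ) + 2/3 * ((RTree.setR2 T1 T2).card : ℝ) ≤
      ⨆ t1 : T1.FullRef, ⨅ t2 : T2.FullRef, RTree.tripletDist t1.1 t2.1 := by
  classical
  set R2 := RTree.setR2 T1 T2 with hR2
  set N := (Finset.univ : Finset (Equiv.Perm (Fin n))).card with hN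
  have hNpos : 0 < N := Finset.card_pos.2 ⟨1, Finset.mem_univ 1⟩
  set ev : Equiv.Perm (Fin n) → Finset (Finset (Fin n)) := fun π =>
    R2.filter fun X => famRestrict (refFam T1 π) X = famRestrict T2.clusters X with hev
  have htotal : 3 * ∑ π : Equiv.Perm (Fin n), (ev π).card = R2.card * N := by
    have h1 : ∑ π : Equiv.Perm (Fin n), (ev π).card
        = ∑ X ∈ R2, (Finset.univ.filter fun π : Equiv.Perm (Fin n) =>
            famRestrict (refFam T1 π) X = famRestrict T2.clusters X).card := by
      simp only [hev, Finset.card_filter]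
      rw [Finset.sum_comm]
    rw [h1, Finset.mul_sum]
    rw [Finset.sum_congr rfl fun X hX => rooted_match_count T1 T2 hX]
    rw [Finset.sum_const, smul_eq_mul]
  obtain ⟨π0, hπ0⟩ : ∃ π : Equiv.Perm (Fin n), 3 * (ev π).card ≤ R2.card := by
    by_contra h
    push_neg at h
    have hle : ∀ π ∈ (Finset.univ : Finset (Equiv.Perm (Fin n))),
        R2.card + 1 ≤ 3 * (ev π).card := fun π _ => h π
    have hsum := Finset.sum_le_sum hle
    rw [Finset.sum_const, smul_eq_mul, ← Finset.mul_sum, htotal] at hsum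
    have e1 : N * (R2.card + 1) = N * R2.card + N := by ring
    have e2 : R2.card * N = N * R2.card := by ring
    rw [e1, e2] at hsum
    omega
  -- the chosen refinement of T1
  set t1 : RTree n := refTree T1 π0 with ht1
  have ht1mem : t1 ∈ T1.FullRef := refTree_mem_FullRef T1 π0
  haveI : Nonempty ↥(T2.FullRef) := ⟨⟨refTree T2 1, refTree_mem_FullRef T2 1⟩⟩
  haveI : Finite (RTree n) := Finite.of_fintype _
  have hbdd : BddAbove (Set.range fun s : T1.FullRef =>
      ⨅ t2 : T2.FullRef, RTree.tripletDist s.1 t2.1) :=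
    (Set.finite_range _).bddAbove
  refine le_ciSup_of_le hbdd ⟨t1, ht1mem⟩ (le_ciInf fun t2s => ?_)
  obtain ⟨t2, ht2FR, ht2sub⟩ := t2s
  -- counting
  set unm : Finset (Finset (Fin n)) := R2.filter (fun X =>
    ¬ famRestrict (refFam T1 π0) X = famRestrict T2.clusters X) with hunm
  have hsplit : (ev π0).card + unm.card = R2.card :=
    Finset.card_filter_add_card_filter_not _
  have hsub1 : RTree.setD T1 T2 ⊆ RTree.setD t1 t2 := by
    intro X hX
    obtain ⟨htr, ⟨C, hC, h2C⟩, ⟨D, hD, h2D⟩, hne⟩ := mem_setD.1 hX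
    have hX3 : X.card = 3 := triplets_iff.1 htr
    have hC1 : C ∈ t1.clusters := clusters_subset_refFam T1 π0 hC
    have hD2 : D ∈ t2.clusters := ht2sub hD
    have e1 : famRestrict t1.clusters X = famRestrict T1.clusters X :=
      (restrict_eq_iff t1 T1 hX3 hC1 h2C hC h2C).2 rfl
    have e2 : famRestrict t2.clusters X = famRestrict T2.clusters X :=
      (restrict_eq_iff t2 T2 hX3 hD2 h2D hD h2D).2 rfl
    exact mem_setD.2 ⟨htr, ⟨C, hC1, h2C⟩, ⟨D, hD2, h2D⟩, by rw [e1, e2]; exact hne⟩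
  have hsub2 : unm ⊆ RTree.setD t1 t2 := by
    intro X hX
    obtain ⟨hXR2, hnm⟩ := Finset.mem_filter.1 hX
    obtain ⟨htr, ⟨D, hD, h2D⟩, hunres⟩ := mem_setR2.1 hXR2
    have hX3 : X.card = 3 := triplets_iff.1 htr
    obtain ⟨S, hS, hS2⟩ := refFam_resolves T1 π0 hX3
    have hD2 : D ∈ t2.clusters := ht2sub hD
    have e2 : famRestrict t2.clusters X = famRestrict T2.clusters X :=
      (restrict_eq_iff t2 T2 hX3 hD2 h2D hD h2D).2 rfl
    refine mem_setD.2 ⟨htr, ⟨S, hS, hS2⟩, ⟨D, hD2, h2D⟩, ?_⟩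
    rw [e2]
    exact hnm
  have hdisj : Disjoint (RTree.setD T1 T2) unm := by
    rw [Finset.disjoint_left]
    intro X h1 h2
    obtain ⟨_, hres1, _, _⟩ := mem_setD.1 h1
    obtain ⟨hXR2, _⟩ := Finset.mem_filter.1 h2
    exact (mem_setR2.1 hXR2).2.2 hres1
  have hunion : RTree.setD T1 T2 ∪ unm ⊆ RTree.setD t1 t2 :=
    Finset.union_subset hsub1 hsub2
  have hcard : (RTree.setD T1 T2).card + unm.card ≤ (RTree.setD t1 t2).card := by
    rw [← Finset.card_union_of_disjoint hdisj]
    exact Finset.card_le_card hunion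
  show ((RTree.setD T1 T2).card : ℝ) + 2/3 * (R2.card : ℝ) ≤ RTree.tripletDist t1 t2
  rw [RTree.tripletDist]
  have c1 : ((RTree.setD T1 T2).card : ℝ) + (unm.card : ℝ) ≤ ((RTree.setD t1 t2).card : ℝ) := by
    exact_mod_cast hcard
  have c2 : 3 * ((ev π0).card : ℝ) ≤ (R2.card : ℝ) := by exact_mod_cast hπ0
  have c3 : ((ev π0).card : ℝ) + (unm.card : ℝ) = (R2.card : ℝ) := by exact_mod_cast hsplit
  linarith

end RootedKey

section RootedHalf

variable {n : ℕ}

lemma setD_comm (T1 T2 : RTree n) : RTree.setD T1 T2 = RTree.setD T2 T1 := by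
  ext X
  rw [mem_setD, mem_setD]
  constructor
  · rintro ⟨h1, h2, h3, h4⟩
    exact ⟨h1, h3, h2, h4.symm⟩
  · rintro ⟨h1, h2, h3, h4⟩
    exact ⟨h1, h3, h2, h4.symm⟩

lemma tripletDist_comm (t1 t2 : RTree n) :
    RTree.tripletDist t1 t2 = RTree.tripletDist t2 t1 := by
  rw [RTree.tripletDist, RTree.tripletDist, setD_comm]

lemma rooted_half (T1 T2 : RTree n) :
    ((RTree.setD T1 T2).card : ℝ) +
        2 / 3 * max ((RTree.setR1 T1 T2).card : ℝ) ((RTree.setR2 T1 T2).card : ℝ) ≤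
      RTree.dHaus T1 T2 := by
  rw [RTree.dHaus]
  rcases le_total ((RTree.setR1 T1 T2).card : ℝ) ((RTree.setR2 T1 T2).card : ℝ) with h | h
  · rw [max_eq_right h]
    exact le_trans (rooted_key T1 T2) (le_max_left _ _)
  · rw [max_eq_left h]
    have hk := rooted_key T2 T1
    have e1 : RTree.setD T2 T1 = RTree.setD T1 T2 := setD_comm T2 T1
    have e2 : RTree.setR2 T2 T1 = RTree.setR1 T1 T2 := rfl
    rw [e1, e2] at hk
    rw [show (⨆ s : T2.FullRef, ⨅ u : T1.FullRef, RTree.tripletDist s.1 u.1)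
        = (⨆ s : T2.FullRef, ⨅ u : T1.FullRef, RTree.tripletDist u.1 s.1) from
      iSup_congr fun s => iInf_congr fun u => tripletDist_comm s.1 u.1] at hk
    exact le_trans hk (le_max_right _ _)

end RootedHalf

section UnrootedRestrict

variable {n : ℕ}

lemma quartets_iff {X : Finset (Fin n)} : X ∈ quartets n ↔ X.card = 4 := by
  simp [quartets, Finset.mem_powersetCard_univ]

lemma mem_famRestrictU {F : Finset (Finset (Fin n))} {X S : Finset (Fin n)} :
    S ∈ famRestrictU F X ↔ (∃ A ∈ F, A ∩ X = S) ∧ S ≠ ∅ ∧ S ≠ X := by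
  simp [famRestrictU]

lemma sdiffu_inter {A X : Finset (Fin n)} :
    (Finset.univ \ A) ∩ X = X \ (A ∩ X) := by
  ext a
  simp only [Finset.mem_inter, Finset.mem_sdiff, Finset.mem_univ, true_and]
  tauto

lemma eq_sdiff_of_partition {P Q X : Finset (Fin n)} (hP : P ⊆ X)
    (hdisj : P ∩ Q = ∅) (hun : P ∪ Q = X) : P = X \ Q := by
  ext a
  simp only [Finset.mem_sdiff]
  constructor
  · intro ha
    refine ⟨hP ha, fun haQ => ?_⟩
    have : a ∈ P ∩ Q := Finset.mem_inter.2 ⟨ha, haQ⟩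
    rw [hdisj] at this
    simp at this
  · rintro ⟨haX, haQ⟩
    have : a ∈ P ∪ Q := hun ▸ haX
    rcases Finset.mem_union.1 this with h | h
    · exact h
    · exact absurd h haQ

/-- In a compatible split system, two splits picking out two elements of a quartet
pick out the same pair-partition. -/
lemma pairU_unique (U : UTree n) {X A B : Finset (Fin n)} (hX : X.card = 4)
    (hA : A ∈ U.splits) (hB : B ∈ U.splits)
    (h2A : (A ∩ X).card = 2) (h2B : (B ∩ X).card = 2) :
    A ∩ X = B ∩ X ∨ A ∩ X = X \ (B ∩ X) := by
  have hsubA : A ∩ X ⊆ X := Finset.inter_subset_right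
  have hsubB : B ∩ X ⊆ X := Finset.inter_subset_right
  rcases U.compat A hA B hB with h | h | h | h
  · exact Or.inl (Finset.eq_of_subset_of_card_le
      (Finset.inter_subset_inter h (Finset.Subset.refl X)) (by omega))
  · exact Or.inl (Finset.eq_of_subset_of_card_le
      (Finset.inter_subset_inter h (Finset.Subset.refl X)) (by omega)).symm
  · refine Or.inr (eq_sdiff_of_partition hsubA ?_ ?_)
    · rw [Finset.eq_empty_iff_forall_notMem]
      intro a ha
      obtain ⟨h1, h2⟩ := Finset.mem_inter.1 ha
      have : a ∈ A ∩ B := Finset.mem_inter.2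
        ⟨(Finset.mem_inter.1 h1).1, (Finset.mem_inter.1 h2).1⟩
      rw [h] at this
      simp at this
    · apply Finset.eq_of_subset_of_card_le (Finset.union_subset hsubA hsubB)
      have hdisj : Disjoint (A ∩ X) (B ∩ X) := by
        rw [Finset.disjoint_left]
        intro a h1 h2
        have : a ∈ A ∩ B := Finset.mem_inter.2
          ⟨(Finset.mem_inter.1 h1).1, (Finset.mem_inter.1 h2).1⟩
        rw [h] at this
        simp at this
      rw [Finset.card_union_of_disjoint hdisj]
      omega
  · have hun : (A ∩ X) ∪ (B ∩ X) = X := by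
      rw [← Finset.union_inter_distrib_right, h, Finset.univ_inter]
    have hint : (A ∩ X) ∩ (B ∩ X) = ∅ := by
      have := Finset.card_union_add_card_inter (A ∩ X) (B ∩ X)
      rw [hun, hX, h2A, h2B] at this
      rw [← Finset.card_eq_zero]
      omega
    exact Or.inr (eq_sdiff_of_partition hsubA hint hun)

lemma singleton_split (U : UTree n) (h4 : 4 ≤ (Finset.univ : Finset (Fin n)).card)
    (x : Fin n) : ({x} : Finset (Fin n)) ∈ U.splits := by
  rcases U.trivial_mem x with h | h
  · exfalso
    have := congrArg Finset.card h
    rw [Finset.card_singleton] at this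
    omega
  · exact h

lemma memU_char (U : UTree n) {X A : Finset (Fin n)} (hX : X.card = 4)
    (hA : A ∈ U.splits) (h2A : (A ∩ X).card = 2) {S : Finset (Fin n)} :
    S ∈ famRestrictU U.splits X ↔
      S ⊆ X ∧ S ≠ ∅ ∧ S ≠ X ∧ (S.card = 2 → (S = A ∩ X ∨ S = X \ (A ∩ X))) := by
  have h4u : 4 ≤ (Finset.univ : Finset (Fin n)).card := by
    rw [← hX]
    exact Finset.card_le_card (Finset.subset_univ X)
  rw [mem_famRestrictU]
  constructor
  · rintro ⟨⟨B, hB, rfl⟩, hne, hneX⟩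
    refine ⟨Finset.inter_subset_right, hne, hneX, fun h2 => ?_⟩
    rcases pairU_unique U hX hB hA h2 h2A with h | h
    · exact Or.inl h
    · exact Or.inr h
  · rintro ⟨hsub, hne, hneX, h2⟩
    have hcard : S.card < 4 := by
      rw [← hX]
      exact Finset.card_lt_card (Finset.ssubset_iff_subset_ne.2 ⟨hsub, hneX⟩)
    have hpos : 0 < S.card := Finset.card_pos.2 (Finset.nonempty_of_ne_empty hne)
    refine ⟨?_, hne, hneX⟩
    interval_cases h : S.card
    · obtain ⟨x, rfl⟩ := Finset.card_eq_one.1 h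
      exact ⟨{x}, singleton_split U h4u x, Finset.inter_eq_left.2 (by simpa using hsub)⟩
    · rcases h2 rfl with rfl | rfl
      · exact ⟨A, hA, rfl⟩
      · exact ⟨Finset.univ \ A, U.compl_mem A hA, sdiffu_inter⟩
    · have hXS : (X \ S).card = 1 := by
        rw [Finset.card_sdiff_of_subset hsub]
        omega
      obtain ⟨x, hx⟩ := Finset.card_eq_one.1 hXS
      have hSeq : S = X \ {x} := by
        rw [← hx, Finset.sdiff_sdiff_eq_self hsub]
      have hxX : x ∈ X := by
        have := Finset.mem_singleton_self x
        rw [← hx, Finset.mem_sdiff] at this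
        exact this.1
      refine ⟨Finset.univ \ {x}, U.compl_mem _ (singleton_split U h4u x), ?_⟩
      rw [sdiffu_inter, hSeq]
      congr 1
      exact Finset.inter_eq_left.2 (by simpa using hxX)

lemma restrictU_eq_iff (U U' : UTree n) {X A B : Finset (Fin n)} (hX : X.card = 4)
    (hA : A ∈ U.splits) (h2A : (A ∩ X).card = 2)
    (hB : B ∈ U'.splits) (h2B : (B ∩ X).card = 2) :
    famRestrictU U.splits X = famRestrictU U'.splits X ↔
      (A ∩ X = B ∩ X ∨ A ∩ X = X \ (B ∩ X)) := by
  constructor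
  · intro h
    have hmem : A ∩ X ∈ famRestrictU U.splits X := by
      rw [mem_famRestrictU]
      refine ⟨⟨A, hA, rfl⟩, ?_, ?_⟩
      · intro he; rw [he] at h2A; simp at h2A
      · intro he; rw [he, hX] at h2A; omega
    rw [h, memU_char U' hX hB h2B] at hmem
    exact hmem.2.2.2 h2A
  · intro h
    ext S
    rw [memU_char U hX hA h2A, memU_char U' hX hB h2B]
    rcases h with h | h
    · rw [h]
    · have h' : X \ (A ∩ X) = B ∩ X := by
        rw [h, Finset.sdiff_sdiff_eq_self Finset.inter_subset_right]
      rw [h, Finset.sdiff_sdiff_eq_self (Finset.inter_subset_right : B ∩ X ⊆ X)]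
      constructor
      · rintro ⟨a1, a2, a3, a4⟩
        exact ⟨a1, a2, a3, fun hc => (a4 hc).symm⟩
      · rintro ⟨a1, a2, a3, a4⟩
        exact ⟨a1, a2, a3, fun hc => (a4 hc).symm⟩

end UnrootedRestrict

section Unroot

variable {n : ℕ}

/-- Rooting an unrooted tree at taxon `0`: the cluster family consists of the split
sides avoiding `0`, plus the full set and `{0}`. -/
noncomputable def rootT (U : UTree n) (hn : 0 < n) : RTree n where
  clusters := U.splits.filter (fun A => (⟨0, hn⟩ : Fin n) ∉ A) ∪
    {Finset.univ, ({⟨0, hn⟩} : Finset (Fin n))}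
  univ_mem := Finset.mem_union_right _ (by simp)
  singleton_mem := by
    intro x
    by_cases hx : x = ⟨0, hn⟩
    · subst hx
      exact Finset.mem_union_right _ (by simp)
    · apply Finset.mem_union_left
      rcases U.trivial_mem x with h | h
      · exfalso
        apply hx
        have h' : (⟨0, hn⟩ : Fin n) ∈ ({x} : Finset (Fin n)) := by
          rw [h]; exact Finset.mem_univ _
        exact (by simpa using h' : (⟨0, hn⟩ : Fin n) = x).symm
      · exact Finset.mem_filter.2 ⟨h, by simpa using fun he => hx he.symm⟩
  empty_not_mem := by
    intro h
    rcases Finset.mem_union.1 h with h | h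
    · exact U.empty_not_mem (Finset.mem_filter.1 h).1
    · rcases Finset.mem_insert.1 h with h | h
      · have : (⟨0, hn⟩ : Fin n) ∈ (∅ : Finset (Fin n)) := by
          rw [h]; exact Finset.mem_univ _
        simp at this
      · rw [Finset.mem_singleton] at h
        have : (⟨0, hn⟩ : Fin n) ∈ (∅ : Finset (Fin n)) := by
          rw [h]; exact Finset.mem_singleton_self _
        simp at this
  laminar := by
    have hmem : ∀ A ∈ U.splits.filter (fun A => (⟨0, hn⟩ : Fin n) ∉ A) ∪
        {Finset.univ, ({⟨0, hn⟩} : Finset (Fin n))},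
        (A ∈ U.splits ∧ (⟨0, hn⟩ : Fin n) ∉ A) ∨ A = Finset.univ ∨
          A = ({⟨0, hn⟩} : Finset (Fin n)) := by
      intro A hA
      rcases Finset.mem_union.1 hA with h | h
      · exact Or.inl (Finset.mem_filter.1 h)
      · rcases Finset.mem_insert.1 h with h | h
        · exact Or.inr (Or.inl h)
        · exact Or.inr (Or.inr (Finset.mem_singleton.1 h))
    intro A hA B hB
    rcases hmem A hA with ⟨hAs, hA0⟩ | rfl | rfl
    · rcases hmem B hB with ⟨hBs, hB0⟩ | rfl | rfl
      · rcases U.compat A hAs B hBs with h | h | h | h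
        · exact Or.inl h
        · exact Or.inr (Or.inl h)
        · exact Or.inr (Or.inr h)
        · exfalso
          have : (⟨0, hn⟩ : Fin n) ∈ A ∪ B := by
            rw [h]; exact Finset.mem_univ _
          rcases Finset.mem_union.1 this with h' | h'
          · exact hA0 h'
          · exact hB0 h'
      · exact Or.inl (Finset.subset_univ A)
      · refine Or.inr (Or.inr ?_)
        rw [Finset.eq_empty_iff_forall_notMem]
        intro a ha
        obtain ⟨h1, h2⟩ := Finset.mem_inter.1 ha
        rw [Finset.mem_singleton] at h2
        exact hA0 (h2 ▸ h1)
    · exact Or.inr (Or.inl (Finset.subset_univ B))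
    · rcases hmem B hB with ⟨hBs, hB0⟩ | rfl | rfl
      · refine Or.inr (Or.inr ?_)
        rw [Finset.eq_empty_iff_forall_notMem]
        intro a ha
        obtain ⟨h1, h2⟩ := Finset.mem_inter.1 ha
        rw [Finset.mem_singleton] at h1
        exact hB0 (h1 ▸ h2)
      · exact Or.inl (Finset.subset_univ _)
      · exact Or.inl (Finset.Subset.refl _)

lemma mem_rootT {U : UTree n} {hn : 0 < n} {A : Finset (Fin n)} :
    A ∈ (rootT U hn).clusters ↔ (A ∈ U.splits ∧ (⟨0, hn⟩ : Fin n) ∉ A) ∨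
      A = Finset.univ ∨ A = ({⟨0, hn⟩} : Finset (Fin n)) := by
  show A ∈ _ ∪ _ ↔ _
  rw [Finset.mem_union, Finset.mem_insert, Finset.mem_singleton, Finset.mem_filter]

lemma resolved_rootT (U : UTree n) (hn : 0 < n) {X : Finset (Fin n)} (hX : X.card = 4) :
    famResolved (rootT U hn).clusters X ↔ famResolvedU U.splits X := by
  constructor
  · rintro ⟨C, hC, h2⟩
    rcases mem_rootT.1 hC with ⟨hs, _⟩ | rfl | rfl
    · exact ⟨C, hs, h2⟩
    · rw [Finset.univ_inter] at h2
      omega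
    · exfalso
      have := Finset.card_le_card (Finset.inter_subset_left :
        ({⟨0, hn⟩} : Finset (Fin n)) ∩ X ⊆ _)
      rw [h2, Finset.card_singleton] at this
      omega
  · rintro ⟨A, hA, h2⟩
    by_cases h0 : (⟨0, hn⟩ : Fin n) ∈ A
    · refine ⟨Finset.univ \ A, mem_rootT.2 (Or.inl ⟨U.compl_mem A hA, by simp [h0]⟩), ?_⟩
      rw [sdiffu_inter, Finset.card_sdiff_of_subset (Finset.inter_subset_right : A ∩ X ⊆ X)]
      omega
    · exact ⟨A, mem_rootT.2 (Or.inl ⟨hA, h0⟩), h2⟩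

/-- The unrooted caterpillar refinement. -/
noncomputable def urefT (U : UTree n) (hn : 0 < n) (π : Equiv.Perm (Fin n)) : UTree n where
  splits :=
    ((refFam (rootT U hn) π).erase Finset.univ) ∪
      ((refFam (rootT U hn) π).erase Finset.univ).image (Finset.univ \ ·)
  empty_not_mem := by
    intro h
    rcases Finset.mem_union.1 h with h | h
    · exact refFam_nonempty_mem _ π (Finset.mem_of_mem_erase h) rfl
    · obtain ⟨C, hC, hCe⟩ := Finset.mem_image.1 h
      obtain ⟨hCne, hCmem⟩ := Finset.mem_erase.1 hC
      apply hCne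
      have hsub : Finset.univ ⊆ C := by
        intro a _
        by_contra ha
        have : a ∈ Finset.univ \ C := Finset.mem_sdiff.2 ⟨Finset.mem_univ a, ha⟩
        rw [hCe] at this
        simp at this
      exact Finset.Subset.antisymm (Finset.subset_univ _) hsub
  trivial_mem := by
    intro x
    by_cases hx : ({x} : Finset (Fin n)) = Finset.univ
    · exact Or.inl hx
    · refine Or.inr (Finset.mem_union_left _ (Finset.mem_erase.2 ⟨hx, ?_⟩))
      exact clusters_subset_refFam _ π ((rootT U hn).singleton_mem x)
  compl_mem := by
    intro A hA
    rcases Finset.mem_union.1 hA with h | h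
    · exact Finset.mem_union_right _ (Finset.mem_image.2 ⟨A, h, rfl⟩)
    · obtain ⟨C, hC, rfl⟩ := Finset.mem_image.1 h
      apply Finset.mem_union_left
      rwa [Finset.sdiff_sdiff_self_left, Finset.univ_inter]
  compat := by
    have hmem : ∀ A ∈ ((refFam (rootT U hn) π).erase Finset.univ) ∪
        ((refFam (rootT U hn) π).erase Finset.univ).image (Finset.univ \ ·),
        A ∈ refFam (rootT U hn) π ∨
          ∃ C ∈ refFam (rootT U hn) π, A = Finset.univ \ C := by
      intro A hA
      rcases Finset.mem_union.1 hA with h | h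
      · exact Or.inl (Finset.mem_of_mem_erase h)
      · obtain ⟨C, hC, rfl⟩ := Finset.mem_image.1 h
        exact Or.inr ⟨C, Finset.mem_of_mem_erase hC, rfl⟩
    intro A hA B hB
    have lam := refFam_laminar (rootT U hn) π
    rcases hmem A hA with hA' | ⟨C, hC, rfl⟩ <;> rcases hmem B hB with hB' | ⟨C', hC', rfl⟩
    · rcases lam A hA' B hB' with h | h | h
      · exact Or.inl h
      · exact Or.inr (Or.inl h)
      · exact Or.inr (Or.inr (Or.inl h))
    · rcases lam A hA' C' hC' with h | h | h
      · -- A ⊆ C' : disjoint from univ \ C'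
        refine Or.inr (Or.inr (Or.inl ?_))
        rw [Finset.eq_empty_iff_forall_notMem]
        intro a ha
        obtain ⟨h1, h2⟩ := Finset.mem_inter.1 ha
        exact (Finset.mem_sdiff.1 h2).2 (h h1)
      · -- C' ⊆ A : union is univ
        refine Or.inr (Or.inr (Or.inr ?_))
        apply Finset.eq_univ_of_forall
        intro a
        rw [Finset.mem_union]
        by_cases haC : a ∈ C'
        · exact Or.inl (h haC)
        · exact Or.inr (Finset.mem_sdiff.2 ⟨Finset.mem_univ a, haC⟩)
      · -- A ∩ C' = ∅ : A ⊆ univ \ C'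
        refine Or.inl ?_
        intro a ha
        refine Finset.mem_sdiff.2 ⟨Finset.mem_univ a, fun haC => ?_⟩
        have : a ∈ A ∩ C' := Finset.mem_inter.2 ⟨ha, haC⟩
        rw [h] at this
        simp at this
    · rcases lam B hB' C hC with h | h | h
      · refine Or.inr (Or.inr (Or.inl ?_))
        rw [Finset.eq_empty_iff_forall_notMem]
        intro a ha
        obtain ⟨h2, h1⟩ := Finset.mem_inter.1 ha
        exact (Finset.mem_sdiff.1 h2).2 (h h1)
      · refine Or.inr (Or.inr (Or.inr ?_))
        apply Finset.eq_univ_of_forall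
        intro a
        rw [Finset.mem_union]
        by_cases haC : a ∈ C
        · exact Or.inr (h haC)
        · exact Or.inl (Finset.mem_sdiff.2 ⟨Finset.mem_univ a, haC⟩)
      · refine Or.inr (Or.inl ?_)
        intro a ha
        refine Finset.mem_sdiff.2 ⟨Finset.mem_univ a, fun haC => ?_⟩
        have : a ∈ B ∩ C := Finset.mem_inter.2 ⟨ha, haC⟩
        rw [h] at this
        simp at this
    · rcases lam C hC C' hC' with h | h | h
      · exact Or.inr (Or.inl (Finset.sdiff_subset_sdiff (Finset.Subset.refl _) h))
      · exact Or.inl (Finset.sdiff_subset_sdiff (Finset.Subset.refl _) h)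
      · refine Or.inr (Or.inr (Or.inr ?_))
        apply Finset.eq_univ_of_forall
        intro a
        rw [Finset.mem_union]
        by_cases haC : a ∈ C
        · refine Or.inr (Finset.mem_sdiff.2 ⟨Finset.mem_univ a, fun haC' => ?_⟩)
          have : a ∈ C ∩ C' := Finset.mem_inter.2 ⟨haC, haC'⟩
          rw [h] at this
          simp at this
        · exact Or.inl (Finset.mem_sdiff.2 ⟨Finset.mem_univ a, haC⟩)

lemma mem_urefT {U : UTree n} {hn : 0 < n} {π : Equiv.Perm (Fin n)} {A : Finset (Fin n)} :
    A ∈ (urefT U hn π).splits ↔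
      (A ∈ refFam (rootT U hn) π ∧ A ≠ Finset.univ) ∨
        ∃ C ∈ refFam (rootT U hn) π, C ≠ Finset.univ ∧ A = Finset.univ \ C := by
  show A ∈ _ ∪ _ ↔ _
  rw [Finset.mem_union]
  constructor
  · rintro (h | h)
    · obtain ⟨h1, h2⟩ := Finset.mem_erase.1 h
      exact Or.inl ⟨h2, h1⟩
    · obtain ⟨C, hC, rfl⟩ := Finset.mem_image.1 h
      obtain ⟨h1, h2⟩ := Finset.mem_erase.1 hC
      exact Or.inr ⟨C, h2, h1, rfl⟩
  · rintro (⟨h1, h2⟩ | ⟨C, h1, h2, rfl⟩)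
    · exact Or.inl (Finset.mem_erase.2 ⟨h2, h1⟩)
    · exact Or.inr (Finset.mem_image.2 ⟨C, Finset.mem_erase.2 ⟨h2, h1⟩, rfl⟩)

lemma splits_subset_urefT (U : UTree n) (hn : 0 < n) (π : Equiv.Perm (Fin n)) :
    U.splits ⊆ (urefT U hn π).splits := by
  intro A hA
  have hAne : A ≠ ∅ := fun h => U.empty_not_mem (h ▸ hA)
  by_cases h0 : (⟨0, hn⟩ : Fin n) ∈ A
  · refine mem_urefT.2 (Or.inr ⟨Finset.univ \ A, ?_, ?_, ?_⟩)
    · exact clusters_subset_refFam _ π (mem_rootT.2 (Or.inl ⟨U.compl_mem A hA, by simp [h0]⟩))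
    · intro h
      apply hAne
      have := Finset.sdiff_sdiff_eq_self (Finset.subset_univ A)
      rw [h, Finset.sdiff_self] at this
      exact this.symm
    · rw [Finset.sdiff_sdiff_eq_self (Finset.subset_univ A)]
  · refine mem_urefT.2 (Or.inl ⟨?_, ?_⟩)
    · exact clusters_subset_refFam _ π (mem_rootT.2 (Or.inl ⟨hA, h0⟩))
    · intro h
      exact h0 (h ▸ Finset.mem_univ _)

/-- Every quartet is cut into `2 + 2` by some member of a caterpillar refinement. -/
lemma refFam_resolves_quartet (T : RTree n) (π : Equiv.Perm (Fin n)) {X : Finset (Fin n)}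
    (hX : X.card = 4) : ∃ S ∈ refFam T π, (S ∩ X).card = 2 := by
  obtain ⟨d, hd⟩ : X.Nonempty := Finset.card_pos.1 (by omega)
  set Y := X.erase d with hY
  have hYc : Y.card = 3 := by rw [hY, Finset.card_erase_of_mem hd, hX]
  obtain ⟨C, hC, h2⟩ := refFam_resolves T π hYc
  have hsubYX : C ∩ Y ⊆ C ∩ X :=
    Finset.inter_subset_inter (Finset.Subset.refl C) (Finset.erase_subset d X)
  have hCX4 : (C ∩ X).card ≤ 4 := hX ▸ Finset.card_le_card Finset.inter_subset_right
  have hCX2 : 2 ≤ (C ∩ X).card := h2 ▸ Finset.card_le_card hsubYX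
  rcases eq_or_ne (C ∩ X).card 2 with h | hne2
  · exact ⟨C, hC, h⟩
  have hCX3 : (C ∩ X).card = 3 := by
    rcases eq_or_ne (C ∩ X).card 4 with h4 | hne4
    · exfalso
      have hXC : X ⊆ C := by
        have heq : C ∩ X = X := Finset.eq_of_subset_of_card_le Finset.inter_subset_right
          (by omega)
        intro a ha
        rw [← heq] at ha
        exact (Finset.mem_inter.1 ha).1
      have : C ∩ Y = Y := Finset.inter_eq_right.2 ((Finset.erase_subset d X).trans hXC)
      rw [this, hYc] at h2
      omega
    · omega
  obtain ⟨D, hD, h2D⟩ := refFam_resolves T π hCX3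
  rcases refFam_laminar T π D hD C hC with h | h | h
  · refine ⟨D, hD, ?_⟩
    have : D ∩ (C ∩ X) = D ∩ X := by
      rw [← Finset.inter_assoc, Finset.inter_eq_left.2 h]
    rwa [this] at h2D
  · exfalso
    have : C ∩ X ⊆ D := fun a ha => h (Finset.mem_inter.1 ha).1
    rw [Finset.inter_eq_right.2 this, hCX3] at h2D
    omega
  · exfalso
    have hsub : D ∩ (C ∩ X) ⊆ D ∩ C := Finset.inter_subset_inter
      (Finset.Subset.refl D) Finset.inter_subset_left
    rw [h] at hsub
    have := Finset.card_le_card hsub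
    rw [Finset.card_empty] at this
    omega

lemma urefT_fullyResolved (U : UTree n) (hn : 0 < n) (π : Equiv.Perm (Fin n)) :
    (urefT U hn π).FullyResolved := by
  intro X hX
  have hX4 : X.card = 4 := quartets_iff.1 hX
  obtain ⟨S, hS, h2⟩ := refFam_resolves_quartet (rootT U hn) π hX4
  refine ⟨S, mem_urefT.2 (Or.inl ⟨hS, ?_⟩), h2⟩
  intro h
  rw [h, Finset.univ_inter] at h2
  omega

lemma urefT_mem_FullRef (U : UTree n) (hn : 0 < n) (π : Equiv.Perm (Fin n)) :
    urefT U hn π ∈ U.FullRef :=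
  ⟨urefT_fullyResolved U hn π, splits_subset_urefT U hn π⟩

end Unroot

section UnrootedCount

variable {n : ℕ}

lemma mem_setR2U {A B : UTree n} {X : Finset (Fin n)} :
    X ∈ UTree.setR2 A B ↔ X ∈ quartets n ∧ famResolvedU B.splits X ∧
      ¬ famResolvedU A.splits X := by
  simp only [UTree.setR2, famSetR2U, Finset.mem_filter, and_assoc]

lemma mem_setDU {A B : UTree n} {X : Finset (Fin n)} :
    X ∈ UTree.setD A B ↔ X ∈ quartets n ∧ famResolvedU A.splits X ∧
      famResolvedU B.splits X ∧ famRestrictU A.splits X ≠ famRestrictU B.splits X := by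
  simp only [UTree.setD, famSetDU, Finset.mem_filter, and_assoc, ne_eq]

lemma split_to_refFam {U : UTree n} {hn : 0 < n} {π : Equiv.Perm (Fin n)}
    {S X : Finset (Fin n)} (hX : X.card = 4)
    (hS : S ∈ (urefT U hn π).splits) (h2 : (S ∩ X).card = 2) :
    ∃ C ∈ refFam (rootT U hn) π, (C ∩ X).card = 2 ∧
      (C ∩ X = S ∩ X ∨ C ∩ X = X \ (S ∩ X)) := by
  rcases mem_urefT.1 hS with ⟨h1, _⟩ | ⟨C, hC, hCne, rfl⟩
  · exact ⟨S, h1, h2, Or.inl rfl⟩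
  · have he : (Finset.univ \ C) ∩ X = X \ (C ∩ X) := sdiffu_inter
    have hcs : (X \ (C ∩ X)).card = X.card - (C ∩ X).card :=
      Finset.card_sdiff_of_subset Finset.inter_subset_right
    rw [he] at h2
    have hC2 : (C ∩ X).card = 2 := by
      have := Finset.card_le_card (Finset.inter_subset_right : C ∩ X ⊆ X)
      omega
    refine ⟨C, hC, hC2, Or.inr ?_⟩
    rw [he, Finset.sdiff_sdiff_eq_self Finset.inter_subset_right]

lemma unrooted_match_count (T1 T2 : UTree n) (hn : 0 < n) {X : Finset (Fin n)}
    (hX : X ∈ UTree.setR2 T1 T2) :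
    3 * (Finset.univ.filter fun π : Equiv.Perm (Fin n) =>
        famRestrictU (urefT T1 hn π).splits X = famRestrictU T2.splits X).card
      = (Finset.univ : Finset (Equiv.Perm (Fin n))).card := by
  obtain ⟨htr, ⟨B2, hB2, h2B2⟩, hunres⟩ := mem_setR2U.1 hX
  have hX4 : X.card = 4 := quartets_iff.1 htr
  set R := rootT T1 hn with hR
  have hunresR : ¬ famResolved R.clusters X := fun h =>
    hunres ((resolved_rootT T1 hn hX4).1 h)
  obtain ⟨C0, hC0, h2C0, hmin⟩ := exists_minimal_cluster R (X := X) (by omega)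
  have hminp := minimal_property hmin
  have h3C0 : 3 ≤ (C0 ∩ X).card := by
    rcases Nat.lt_or_ge (C0 ∩ X).card 3 with h | h
    · exfalso
      exact hunresR ⟨C0, hC0, by omega⟩
    · exact h
  have h4C0 : (C0 ∩ X).card ≤ 4 := hX4 ▸ Finset.card_le_card Finset.inter_subset_right
  set P := B2 ∩ X with hP
  have hPsub : P ⊆ X := Finset.inter_subset_right
  have hPcard : P.card = 2 := h2B2
  have hXPcard : (X \ P).card = 2 := by
    rw [Finset.card_sdiff_of_subset hPsub]
    omega
  set r : Fin n → Fin n := fun y => rp R C0 y with hr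
  -- forward analysis, common to both cases
  have hforward : ∀ π : Equiv.Perm (Fin n),
      famRestrictU (urefT T1 hn π).splits X = famRestrictU T2.splits X →
      ∃ t ∈ C0 ∩ X,
        ((C0 ∩ X).filter fun y => π (r t) ≤ π (r y)) = P ∨
        ((C0 ∩ X).filter fun y => π (r t) ≤ π (r y)) = X \ P := by
    intro π h
    obtain ⟨S0, hS0, hS02⟩ := urefT_fullyResolved T1 hn π X htr
    have heq : S0 ∩ X = P ∨ S0 ∩ X = X \ P :=
      (restrictU_eq_iff (urefT T1 hn π) T2 hX4 hS0 hS02 hB2 h2B2).1 h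
    obtain ⟨C, hC, hC2, hCrel⟩ := split_to_refFam hX4 hS0 hS02
    obtain ⟨t, ht, hfil⟩ := refFam_pair_structure R π (by omega) hunresR hC0
      (by omega) hmin hC hC2
    refine ⟨t, ht, ?_⟩
    rw [← hfil]
    rcases hCrel with h1 | h1 <;> rcases heq with h2 | h2
    · exact Or.inl (h1.trans h2)
    · exact Or.inr (h1.trans h2)
    · exact Or.inr (by rw [h1, h2])
    · refine Or.inl ?_
      rw [h1, h2, Finset.sdiff_sdiff_eq_self hPsub]
  -- backward tool
  have hbackward : ∀ π : Equiv.Perm (Fin n), ∀ S ∈ (urefT T1 hn π).splits,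
      (S ∩ X).card = 2 → (S ∩ X = P ∨ S ∩ X = X \ P) →
      famRestrictU (urefT T1 hn π).splits X = famRestrictU T2.splits X := by
    intro π S hS h2 hrel
    exact (restrictU_eq_iff (urefT T1 hn π) T2 hX4 hS h2 hB2 h2B2).2 hrel
  rcases (by omega : (C0 ∩ X).card = 3 ∨ (C0 ∩ X).card = 4) with hc3 | hc4
  · -- Case |C0 ∩ X| = 3
    set Y := C0 ∩ X with hY
    have hYsub : Y ⊆ X := Finset.inter_subset_right
    have hXYcard : (X \ Y).card = 1 := by rw [Finset.card_sdiff_of_subset hYsub]; omega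
    obtain ⟨d, hd⟩ := Finset.card_eq_one.1 hXYcard
    have hdX : d ∈ X := by
      have := Finset.mem_singleton_self d
      rw [← hd, Finset.mem_sdiff] at this
      exact this.1
    have hdY : d ∉ Y := by
      have := Finset.mem_singleton_self d
      rw [← hd, Finset.mem_sdiff] at this
      exact this.2
    have hYXd : Y = X \ {d} := by
      have h := Finset.sdiff_sdiff_eq_self hYsub
      rw [hd] at h
      exact h.symm
    -- Q : the side of the partition avoiding d
    obtain ⟨Q, hQrel, hQsub, hQcard, hdQ⟩ :
        ∃ Q : Finset (Fin n), (Q = P ∨ Q = X \ P) ∧ Q ⊆ X ∧ Q.card = 2 ∧ d ∉ Q := by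
      by_cases hdP : d ∈ P
      · exact ⟨X \ P, Or.inr rfl, Finset.sdiff_subset, hXPcard,
          fun h => (Finset.mem_sdiff.1 h).2 hdP⟩
      · exact ⟨P, Or.inl rfl, hPsub, hPcard, hdP⟩
    have hQY : Q ⊆ Y := by
      intro a ha
      rw [hYXd, Finset.mem_sdiff, Finset.mem_singleton]
      exact ⟨hQsub ha, fun h => hdQ (h ▸ ha)⟩
    have hYQcard : (Y \ Q).card = 1 := by
      rw [Finset.card_sdiff_of_subset hQY]
      omega
    obtain ⟨e, he⟩ := Finset.card_eq_one.1 hYQcard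
    have heY : e ∈ Y := by
      have := Finset.mem_singleton_self e
      rw [← he, Finset.mem_sdiff] at this
      exact this.1
    have heQ : e ∉ Q := by
      have := Finset.mem_singleton_self e
      rw [← he, Finset.mem_sdiff] at this
      exact this.2
    have hQYe : Q = Y.erase e := by
      have h := Finset.sdiff_sdiff_eq_self hQY
      rw [he] at h
      rw [← h, Finset.erase_eq]
    obtain ⟨u, v, huv, hQuv⟩ := Finset.card_eq_two.1 hQcard
    have huQ : u ∈ Q := hQuv ▸ Finset.mem_insert_self u {v}
    have hvQ : v ∈ Q := hQuv ▸ by simp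
    have huY : u ∈ Y := hQY huQ
    have hvY : v ∈ Y := hQY hvQ
    have hue : u ≠ e := fun h => heQ (h ▸ huQ)
    have hve : v ≠ e := fun h => heQ (h ▸ hvQ)
    have hreu : r e ≠ r u := rp_injOn R hC0 hminp heY huY (fun h => hue h.symm)
    have hrev : r e ≠ r v := rp_injOn R hC0 hminp heY hvY (fun h => hve h.symm)
    have hruv : r u ≠ r v := rp_injOn R hC0 hminp huY hvY huv
    have hiff : ∀ π : Equiv.Perm (Fin n),
        (famRestrictU (urefT T1 hn π).splits X = famRestrictU T2.splits X) ↔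
          (π (r e) < π (r u) ∧ π (r e) < π (r v)) := by
      intro π
      constructor
      · intro h
        obtain ⟨t, ht, hfil⟩ := hforward π h
        have hFsub : ((C0 ∩ X).filter fun y => π (r t) ≤ π (r y)) ⊆ Y :=
          Finset.filter_subset _ _
        have hF : ((C0 ∩ X).filter fun y => π (r t) ≤ π (r y)) = Q := by
          have hdF : d ∉ ((C0 ∩ X).filter fun y => π (r t) ≤ π (r y)) :=
            fun hc => hdY (hFsub hc)
          rcases hfil with h1 | h1 <;> rcases hQrel with h2 | h2
          · rw [h1, h2]
          · exfalso
            apply hdQ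
            rw [h2]
            refine Finset.mem_sdiff.2 ⟨hdX, fun hdP' => ?_⟩
            exact hdF (by rw [h1]; exact hdP')
          · exfalso
            apply hdF
            rw [h1]
            refine Finset.mem_sdiff.2 ⟨hdX, fun hdP' => ?_⟩
            exact hdQ (by rw [h2]; exact hdP')
          · rw [h1, ← h2]
        have heF : e ∉ ((C0 ∩ X).filter fun y => π (r t) ≤ π (r y)) := hF ▸ heQ
        have hele : π (r e) < π (r t) := by
          simp only [Finset.mem_filter] at heF
          push_neg at heF
          exact heF heY
        constructor
        · have : u ∈ (C0 ∩ X).filter fun y => π (r t) ≤ π (r y) := hF ▸ huQ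
          simp only [Finset.mem_filter] at this
          exact hele.trans_le this.2
        · have : v ∈ (C0 ∩ X).filter fun y => π (r t) ≤ π (r y) := hF ▸ hvQ
          simp only [Finset.mem_filter] at this
          exact hele.trans_le this.2
      · rintro ⟨h1, h2⟩
        have hstrict : ∀ w ∈ C0 ∩ X, w ≠ e → π (rp R C0 e) < π (rp R C0 w) := by
          intro w hw hwne
          have : w ∈ Y.erase e := Finset.mem_erase.2 ⟨hwne, hw⟩
          rw [← hQYe, hQuv] at this
          rcases Finset.mem_insert.1 this with rfl | h'
          · exact h1
          · rw [Finset.mem_singleton] at h'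
            subst h'
            exact h2
        obtain ⟨S, hSref, hSX⟩ := exists_suf_inter R π hC0 heY
          (by rw [← hY]; omega) hstrict
        have hSXQ : S ∩ X = Q := by rw [hSX, ← hY, ← hQYe]
        have hSne : S ≠ Finset.univ := by
          intro hS
          have : d ∈ S ∩ X := by
            rw [hS]
            exact Finset.mem_inter.2 ⟨Finset.mem_univ d, hdX⟩
          rw [hSXQ] at this
          exact hdQ this
        refine hbackward π S (mem_urefT.2 (Or.inl ⟨hSref, hSne⟩)) ?_ ?_
        · rw [hSXQ]; exact hQcard
        · rw [hSXQ]; exact hQrel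
    rw [Finset.filter_congr (fun π _ => hiff π)]
    exact perm_count3 hreu hrev hruv
  · -- Case |C0 ∩ X| = 4
    have hC0X : C0 ∩ X = X :=
      Finset.eq_of_subset_of_card_le Finset.inter_subset_right (by omega)
    obtain ⟨p1, p2, hp12, hPuv⟩ := Finset.card_eq_two.1 hPcard
    obtain ⟨q1, q2, hq12, hQuv⟩ := Finset.card_eq_two.1 hXPcard
    have hp1P : p1 ∈ P := hPuv ▸ Finset.mem_insert_self p1 {p2}
    have hp2P : p2 ∈ P := hPuv ▸ by simp
    have hq1XP : q1 ∈ X \ P := hQuv ▸ Finset.mem_insert_self q1 {q2}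
    have hq2XP : q2 ∈ X \ P := hQuv ▸ by simp
    have hp1X : p1 ∈ X := hPsub hp1P
    have hp2X : p2 ∈ X := hPsub hp2P
    have hq1X : q1 ∈ X := (Finset.mem_sdiff.1 hq1XP).1
    have hq2X : q2 ∈ X := (Finset.mem_sdiff.1 hq2XP).1
    have hq1P : q1 ∉ P := (Finset.mem_sdiff.1 hq1XP).2
    have hq2P : q2 ∉ P := (Finset.mem_sdiff.1 hq2XP).2
    have hq1p1 : q1 ≠ p1 := fun h => hq1P (h ▸ hp1P)
    have hq1p2 : q1 ≠ p2 := fun h => hq1P (h ▸ hp2P)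
    have hq2p1 : q2 ≠ p1 := fun h => hq2P (h ▸ hp1P)
    have hq2p2 : q2 ≠ p2 := fun h => hq2P (h ▸ hp2P)
    have hmemC : ∀ y ∈ X, y ∈ C0 ∩ X := fun y hy => by rw [hC0X]; exact hy
    have hrq12 : r q1 ≠ r q2 := rp_injOn R hC0 hminp (hmemC _ hq1X) (hmemC _ hq2X) hq12
    have hrq1p1 : r q1 ≠ r p1 := rp_injOn R hC0 hminp (hmemC _ hq1X) (hmemC _ hp1X) hq1p1
    have hrq1p2 : r q1 ≠ r p2 := rp_injOn R hC0 hminp (hmemC _ hq1X) (hmemC _ hp2X) hq1p2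
    have hrq2p1 : r q2 ≠ r p1 := rp_injOn R hC0 hminp (hmemC _ hq2X) (hmemC _ hp1X) hq2p1
    have hrq2p2 : r q2 ≠ r p2 := rp_injOn R hC0 hminp (hmemC _ hq2X) (hmemC _ hp2X) hq2p2
    have hrp12 : r p1 ≠ r p2 := rp_injOn R hC0 hminp (hmemC _ hp1X) (hmemC _ hp2X) hp12
    -- helper: build a suffix split whose trace on X is a prescribed pair A
    have hconstruct : ∀ π : Equiv.Perm (Fin n), ∀ A : Finset (Fin n), ∀ t : Fin n,
        t ∈ A → A ⊆ X → (A = P ∨ A = X \ P) →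
        (∀ y ∈ A, π (r t) ≤ π (r y)) → (∀ y ∈ X, y ∉ A → π (r y) < π (r t)) →
        famRestrictU (urefT T1 hn π).splits X = famRestrictU T2.splits X := by
      intro π A t htA hAX hArel hmin1 hmax1
      have hAcard : A.card = 2 := by
        rcases hArel with rfl | rfl
        · exact hPcard
        · exact hXPcard
      have htC0 : t ∈ C0 := by
        have : t ∈ C0 ∩ X := hmemC _ (hAX htA)
        exact (Finset.mem_inter.1 this).1
      set S := suf R π C0 t with hS
      have hSX : S ∩ X = A := by
        rw [hS, suf_inter_eq, hC0X]
        ext y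
        simp only [Finset.mem_filter]
        constructor
        · rintro ⟨hyX, hcond⟩
          by_contra hyA
          exact absurd hcond (not_le.2 (hmax1 y hyX hyA))
        · intro hyA
          exact ⟨hAX hyA, hmin1 y hyA⟩
      have hSref : S ∈ refFam R π :=
        mem_refFam.2 (Or.inr ⟨C0, hC0, t, htC0, rfl⟩)
      have hSne : S ≠ Finset.univ := by
        intro hseq
        have hXA : (X \ A).Nonempty := by
          rw [← Finset.card_pos, Finset.card_sdiff_of_subset hAX]
          omega
        obtain ⟨y, hy⟩ := hXA
        obtain ⟨hyX, hyA⟩ := Finset.mem_sdiff.1 hy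
        apply hyA
        rw [← hSX, hseq]
        exact Finset.mem_inter.2 ⟨Finset.mem_univ y, hyX⟩
      refine hbackward π S (mem_urefT.2 (Or.inl ⟨hSref, hSne⟩)) ?_ ?_
      · rw [hSX]; exact hAcard
      · rw [hSX]; exact hArel
    have hiff : ∀ π : Equiv.Perm (Fin n),
        (famRestrictU (urefT T1 hn π).splits X = famRestrictU T2.splits X) ↔
          bot2 (r q1) (r q2) (r p1) (r p2) π := by
      intro π
      constructor
      · intro h
        obtain ⟨t, ht, hfil⟩ := hforward π h
        rw [hC0X] at hfil
        have hqlt : ∀ q ∈ X, q ∉ (X.filter fun y => π (r t) ≤ π (r y)) →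
            π (r q) < π (r t) := by
          intro q hqX hq
          simp only [Finset.mem_filter] at hq
          push_neg at hq
          exact hq hqX
        have hple : ∀ p, p ∈ (X.filter fun y => π (r t) ≤ π (r y)) →
            π (r t) ≤ π (r p) := by
          intro p hp
          exact (Finset.mem_filter.1 hp).2
        rcases hfil with h1 | h1
        · refine Or.inl ⟨?_, ?_, ?_, ?_⟩
          · exact (hqlt q1 hq1X (by rw [h1]; exact hq1P)).trans_le (hple p1 (by rw [h1]; exact hp1P))
          · exact (hqlt q1 hq1X (by rw [h1]; exact hq1P)).trans_le (hple p2 (by rw [h1]; exact hp2P))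
          · exact (hqlt q2 hq2X (by rw [h1]; exact hq2P)).trans_le (hple p1 (by rw [h1]; exact hp1P))
          · exact (hqlt q2 hq2X (by rw [h1]; exact hq2P)).trans_le (hple p2 (by rw [h1]; exact hp2P))
        · have hp1f : p1 ∉ X.filter fun y => π (r t) ≤ π (r y) := by
            rw [h1]
            exact fun hc => (Finset.mem_sdiff.1 hc).2 hp1P
          have hp2f : p2 ∉ X.filter fun y => π (r t) ≤ π (r y) := by
            rw [h1]
            exact fun hc => (Finset.mem_sdiff.1 hc).2 hp2P
          refine Or.inr ⟨?_, ?_, ?_, ?_⟩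
          · exact (hqlt p1 hp1X hp1f).trans_le (hple q1 (by rw [h1]; exact hq1XP))
          · exact (hqlt p2 hp2X hp2f).trans_le (hple q1 (by rw [h1]; exact hq1XP))
          · exact (hqlt p1 hp1X hp1f).trans_le (hple q2 (by rw [h1]; exact hq2XP))
          · exact (hqlt p2 hp2X hp2f).trans_le (hple q2 (by rw [h1]; exact hq2XP))
      · intro hb
        rcases hb with ⟨h1, h2, h3, h4⟩ | ⟨h1, h2, h3, h4⟩
        · -- q's below p's : upper pair is P
          obtain ⟨t, htP, htmin⟩ := Finset.exists_min_image P (fun y => π (r y))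
            (by rw [← Finset.card_pos]; omega)
          refine hconstruct π P t htP hPsub (Or.inl rfl) htmin ?_
          intro y hyX hyP
          have hy' : y ∈ X \ P := Finset.mem_sdiff.2 ⟨hyX, hyP⟩
          rw [hQuv] at hy'
          have ht' : t = p1 ∨ t = p2 := by
            have := htP
            rw [hPuv] at this
            rcases Finset.mem_insert.1 this with h | h
            · exact Or.inl h
            · exact Or.inr (Finset.mem_singleton.1 h)
          rcases Finset.mem_insert.1 hy' with rfl | hy''
          · rcases ht' with rfl | rfl
            · exact h1
            · exact h2
          · rw [Finset.mem_singleton] at hy''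
            subst hy''
            rcases ht' with rfl | rfl
            · exact h3
            · exact h4
        · -- p's below q's : upper pair is X \ P
          obtain ⟨t, htQ, htmin⟩ := Finset.exists_min_image (X \ P) (fun y => π (r y))
            (by rw [← Finset.card_pos]; omega)
          refine hconstruct π (X \ P) t htQ Finset.sdiff_subset (Or.inr rfl) htmin ?_
          intro y hyX hyQ
          have hy' : y ∈ P := by
            by_contra hyP
            exact hyQ (Finset.mem_sdiff.2 ⟨hyX, hyP⟩)
          rw [hPuv] at hy'
          have ht' : t = q1 ∨ t = q2 := by
            have := htQ
            rw [hQuv] at this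
            rcases Finset.mem_insert.1 this with h | h
            · exact Or.inl h
            · exact Or.inr (Finset.mem_singleton.1 h)
          rcases Finset.mem_insert.1 hy' with rfl | hy''
          · rcases ht' with rfl | rfl
            · exact h1
            · exact h3
          · rw [Finset.mem_singleton] at hy''
            subst hy''
            rcases ht' with rfl | rfl
            · exact h2
            · exact h4
    rw [Finset.filter_congr (fun π _ => hiff π)]
    exact perm_count4 hrq12 hrq1p1 hrq1p2 hrq2p1 hrq2p2 hrp12

end UnrootedCount

section UnrootedKey

variable {n : ℕ}

lemma unrooted_key (T1 T2 : UTree n) :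
    ((UTree.setD T1 T2).card : ℝ) + 2/3 * ((UTree.setR2 T1 T2).card : ℝ) ≤
      ⨆ t1 : T1.FullRef, ⨅ t2 : T2.FullRef, UTree.quartetDist t1.1 t2.1 := by
  classical
  haveI : Finite (UTree n) := Finite.of_fintype _
  rcases Nat.eq_zero_or_pos n with hn0 | hn
  · -- no quartets at all
    have hq : quartets n = ∅ := by
      rw [Finset.eq_empty_iff_forall_notMem]
      intro X hX
      have h4 := quartets_iff.1 hX
      have h5 := Finset.card_le_card (Finset.subset_univ X)
      rw [Finset.card_univ, Fintype.card_fin] at h5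
      omega
    have hD : UTree.setD T1 T2 = ∅ := by
      rw [UTree.setD, famSetDU, hq, Finset.filter_empty]
    have hR : UTree.setR2 T1 T2 = ∅ := by
      rw [UTree.setR2, famSetR2U, hq, Finset.filter_empty]
    have hFR : ∀ T : UTree n, T ∈ T.FullRef := by
      intro T
      refine ⟨?_, Finset.Subset.refl _⟩
      intro X hX
      rw [hq] at hX
      simp at hX
    haveI : Nonempty ↥(T2.FullRef) := ⟨⟨T2, hFR T2⟩⟩
    have hbdd : BddAbove (Set.range fun s : T1.FullRef =>
        ⨅ t2 : T2.FullRef, UTree.quartetDist s.1 t2.1) :=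
      (Set.finite_range _).bddAbove
    rw [hD, hR]
    simp only [Finset.card_empty, Nat.cast_zero, mul_zero, add_zero]
    refine le_ciSup_of_le hbdd ⟨T1, hFR T1⟩ (le_ciInf fun t2s => ?_)
    rw [UTree.quartetDist]
    positivity
  · set R2 := UTree.setR2 T1 T2 with hR2
    set N := (Finset.univ : Finset (Equiv.Perm (Fin n))).card with hN
    have hNpos : 0 < N := Finset.card_pos.2 ⟨1, Finset.mem_univ 1⟩
    set ev : Equiv.Perm (Fin n) → Finset (Finset (Fin n)) := fun π =>
      R2.filter fun X => famRestrictU (urefT T1 hn π).splits X = famRestrictU T2.splits X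
      with hev
    have htotal : 3 * ∑ π : Equiv.Perm (Fin n), (ev π).card = R2.card * N := by
      have h1 : ∑ π : Equiv.Perm (Fin n), (ev π).card
          = ∑ X ∈ R2, (Finset.univ.filter fun π : Equiv.Perm (Fin n) =>
              famRestrictU (urefT T1 hn π).splits X = famRestrictU T2.splits X).card := by
        simp only [hev, Finset.card_filter]
        rw [Finset.sum_comm]
      rw [h1, Finset.mul_sum]
      rw [Finset.sum_congr rfl fun X hX => unrooted_match_count T1 T2 hn hX]
      rw [Finset.sum_const, smul_eq_mul]
    obtain ⟨π0, hπ0⟩ : ∃ π : Equiv.Perm (Fin n), 3 * (ev π).card ≤ R2.card := by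
      by_contra h
      push_neg at h
      have hle : ∀ π ∈ (Finset.univ : Finset (Equiv.Perm (Fin n))),
          R2.card + 1 ≤ 3 * (ev π).card := fun π _ => h π
      have hsum := Finset.sum_le_sum hle
      rw [Finset.sum_const, smul_eq_mul, ← Finset.mul_sum, htotal] at hsum
      have e1 : N * (R2.card + 1) = N * R2.card + N := by ring
      have e2 : R2.card * N = N * R2.card := by ring
      rw [e1, e2] at hsum
      omega
    set t1 : UTree n := urefT T1 hn π0 with ht1
    have ht1mem : t1 ∈ T1.FullRef := urefT_mem_FullRef T1 hn π0
    haveI : Nonempty ↥(T2.FullRef) := ⟨⟨urefT T2 hn 1, urefT_mem_FullRef T2 hn 1⟩⟩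
    have hbdd : BddAbove (Set.range fun s : T1.FullRef =>
        ⨅ t2 : T2.FullRef, UTree.quartetDist s.1 t2.1) :=
      (Set.finite_range _).bddAbove
    refine le_ciSup_of_le hbdd ⟨t1, ht1mem⟩ (le_ciInf fun t2s => ?_)
    obtain ⟨t2, ht2FR, ht2sub⟩ := t2s
    set unm : Finset (Finset (Fin n)) := R2.filter (fun X =>
      ¬ famRestrictU (urefT T1 hn π0).splits X = famRestrictU T2.splits X) with hunm
    have hsplit : (ev π0).card + unm.card = R2.card :=
      Finset.card_filter_add_card_filter_not _
    have hsub1 : UTree.setD T1 T2 ⊆ UTree.setD t1 t2 := by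
      intro X hX
      obtain ⟨htr, ⟨A, hA, h2A⟩, ⟨B, hB, h2B⟩, hne⟩ := mem_setDU.1 hX
      have hX4 : X.card = 4 := quartets_iff.1 htr
      have hA1 : A ∈ t1.splits := splits_subset_urefT T1 hn π0 hA
      have hB2 : B ∈ t2.splits := ht2sub hB
      have e1 : famRestrictU t1.splits X = famRestrictU T1.splits X :=
        (restrictU_eq_iff t1 T1 hX4 hA1 h2A hA h2A).2 (Or.inl rfl)
      have e2 : famRestrictU t2.splits X = famRestrictU T2.splits X :=
        (restrictU_eq_iff t2 T2 hX4 hB2 h2B hB h2B).2 (Or.inl rfl)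
      exact mem_setDU.2 ⟨htr, ⟨A, hA1, h2A⟩, ⟨B, hB2, h2B⟩, by rw [e1, e2]; exact hne⟩
    have hsub2 : unm ⊆ UTree.setD t1 t2 := by
      intro X hX
      obtain ⟨hXR2, hnm⟩ := Finset.mem_filter.1 hX
      obtain ⟨htr, ⟨B, hB, h2B⟩, hunres⟩ := mem_setR2U.1 hXR2
      have hX4 : X.card = 4 := quartets_iff.1 htr
      obtain ⟨S, hS, hS2⟩ := urefT_fullyResolved T1 hn π0 X htr
      have hB2 : B ∈ t2.splits := ht2sub hB
      have e2 : famRestrictU t2.splits X = famRestrictU T2.splits X :=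
        (restrictU_eq_iff t2 T2 hX4 hB2 h2B hB h2B).2 (Or.inl rfl)
      refine mem_setDU.2 ⟨htr, ⟨S, hS, hS2⟩, ⟨B, hB2, h2B⟩, ?_⟩
      rw [e2]
      exact hnm
    have hdisj : Disjoint (UTree.setD T1 T2) unm := by
      rw [Finset.disjoint_left]
      intro X h1 h2
      obtain ⟨_, hres1, _, _⟩ := mem_setDU.1 h1
      obtain ⟨hXR2, _⟩ := Finset.mem_filter.1 h2
      exact (mem_setR2U.1 hXR2).2.2 hres1
    have hcard : (UTree.setD T1 T2).card + unm.card ≤ (UTree.setD t1 t2).card := by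
      rw [← Finset.card_union_of_disjoint hdisj]
      exact Finset.card_le_card (Finset.union_subset hsub1 hsub2)
    show ((UTree.setD T1 T2).card : ℝ) + 2/3 * (R2.card : ℝ) ≤ UTree.quartetDist t1 t2
    rw [UTree.quartetDist]
    have c1 : ((UTree.setD T1 T2).card : ℝ) + (unm.card : ℝ)
        ≤ ((UTree.setD t1 t2).card : ℝ) := by exact_mod_cast hcard
    have c2 : 3 * ((ev π0).card : ℝ) ≤ (R2.card : ℝ) := by exact_mod_cast hπ0
    have c3 : ((ev π0).card : ℝ) + (unm.card : ℝ) = (R2.card : ℝ) := by exact_mod_cast hsplit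
    linarith

lemma setDU_comm (T1 T2 : UTree n) : UTree.setD T1 T2 = UTree.setD T2 T1 := by
  ext X
  rw [mem_setDU, mem_setDU]
  constructor
  · rintro ⟨h1, h2, h3, h4⟩
    exact ⟨h1, h3, h2, h4.symm⟩
  · rintro ⟨h1, h2, h3, h4⟩
    exact ⟨h1, h3, h2, h4.symm⟩

lemma quartetDist_comm (t1 t2 : UTree n) :
    UTree.quartetDist t1 t2 = UTree.quartetDist t2 t1 := by
  rw [UTree.quartetDist, UTree.quartetDist, setDU_comm]

lemma unrooted_half (T1 T2 : UTree n) :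
    ((UTree.setD T1 T2).card : ℝ) +
        2 / 3 * max ((UTree.setR1 T1 T2).card : ℝ) ((UTree.setR2 T1 T2).card : ℝ) ≤
      UTree.dHaus T1 T2 := by
  rw [UTree.dHaus]
  rcases le_total ((UTree.setR1 T1 T2).card : ℝ) ((UTree.setR2 T1 T2).card : ℝ) with h | h
  · rw [max_eq_right h]
    exact le_trans (unrooted_key T1 T2) (le_max_left _ _)
  · rw [max_eq_left h]
    have hk := unrooted_key T2 T1
    have e1 : UTree.setD T2 T1 = UTree.setD T1 T2 := setDU_comm T2 T1
    have e2 : UTree.setR2 T2 T1 = UTree.setR1 T1 T2 := rfl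
    rw [e1, e2] at hk
    rw [show (⨆ s : T2.FullRef, ⨅ u : T1.FullRef, UTree.quartetDist s.1 u.1)
        = (⨆ s : T2.FullRef, ⨅ u : T1.FullRef, UTree.quartetDist u.1 s.1) from
      iSup_congr fun s => iInf_congr fun u => quartetDist_comm s.1 u.1] at hk
    exact le_trans hk (le_max_right _ _)

end UnrootedKey


/-- **Lemma (lower bound for the Hausdorff distance).**  For every two rooted
(resp. unrooted) phylogenies `T₁`, `T₂` over the same taxon set,
`d_Haus(T₁,T₂) ≥ |D(T₁,T₂)| + (2/3)·max{|R₁(T₁,T₂)|, |R₂(T₁,T₂)|}`. -/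
theorem hausdorff_lower_bound (n : ℕ) :
    (∀ T₁ T₂ : RTree n,
      ((RTree.setD T₁ T₂).card : ℝ) +
          2 / 3 * max ((RTree.setR1 T₁ T₂).card : ℝ) ((RTree.setR2 T₁ T₂).card : ℝ) ≤
        RTree.dHaus T₁ T₂) ∧
    ∀ T₁ T₂ : UTree n,
      ((UTree.setD T₁ T₂).card : ℝ) +
          2 / 3 * max ((UTree.setR1 T₁ T₂).card : ℝ) ((UTree.setR2 T₁ T₂).card : ℝ) ≤
        UTree.dHaus T₁ T₂ := by
  exact ⟨fun T₁ T₂ => rooted_half T₁ T₂, fun T₁ T₂ => unrooted_half T₁ T₂⟩
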